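/- arXiv:1803.05502 — 7 statements merged into one kernel-verified Lean document; each statement's English description precedes it below -/
import Mathlib

section
/- Let $\sigma > 0$ and $\lambda > 0$ be real numbers. Then for all $t \ge 0$, $\int_0^t e^{-\sigma(t-\tau)} (1+\tau)^{-\lambda} \, d\tau \le d_1(\lambda,\sigma) (1+t)^{-\lambda}$, where $d_1(\lambda,\sigma) = 2^{\lambda} \big[ ((\lambda+1)/(e\sigma))^{\lambda+1} e^{\sigma} + 1/\sigma \big]$. -/
open Real intervalIntegral

lemma key_rpow_exp (a b x : ℝ) (ha : 0 < a) (hb : 0 < b) (hx : 0 < x) :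
    x ^ a * Real.exp (-(b * x)) ≤ (a / (Real.exp 1 * b)) ^ a := by
  set u : ℝ := b * x / a with hu_def
  have hu : 0 < u := by positivity
  have h1 : u ≤ Real.exp (u - 1) := by
    have := Real.add_one_le_exp (u - 1); linarith
  have h2 : u ^ a ≤ Real.exp ((u - 1) * a) := by
    calc u ^ a ≤ Real.exp (u - 1) ^ a := Real.rpow_le_rpow hu.le h1 ha.le
    _ = Real.exp ((u - 1) * a) := (Real.exp_mul _ _).symm
  have hxu : x = a / b * u := by rw [hu_def]; field_simp
  have hbx : b * x = a * u := by rw [hxu]; field_simp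
  have hab : (0:ℝ) < a / b := by positivity
  have hLHS : x ^ a * Real.exp (-(b * x)) = (a / b) ^ a * (u ^ a * Real.exp (-(a * u))) := by
    rw [hxu, Real.mul_rpow hab.le hu.le, show b * (a / b * u) = a * u by field_simp]; ring
  have hRHS : (a / (Real.exp 1 * b)) ^ a = (a / b) ^ a * Real.exp (-a) := by
    have : a / (Real.exp 1 * b) = a / b * (Real.exp 1)⁻¹ := by
      rw [mul_comm, ← div_div, div_eq_mul_inv]
    rw [this, Real.mul_rpow hab.le (by positivity),
      Real.inv_rpow (Real.exp_pos 1).le, Real.exp_one_rpow, ← Real.exp_neg]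
  rw [hLHS, hRHS]
  have : u ^ a * Real.exp (-(a * u)) ≤ Real.exp (-a) := by
    calc u ^ a * Real.exp (-(a * u)) ≤ Real.exp ((u - 1) * a) * Real.exp (-(a * u)) := by
          exact mul_le_mul_of_nonneg_right h2 (Real.exp_pos _).le
      _ = Real.exp (-a) := by rw [← Real.exp_add]; ring_nf
  exact mul_le_mul_of_nonneg_left this (by positivity)

/-- For `σ > 0`, `λ > 0` and all `t ≥ 0`,
`∫_0^t e^{-σ(t-τ)} (1+τ)^{-λ} dτ ≤ d₁(λ,σ) (1+t)^{-λ}`, where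
`d₁(λ,σ) = 2^λ [ ((λ+1)/(e σ))^{λ+1} e^σ + 1/σ ]`. -/
theorem stmt2 (σ lam : ℝ) (hσ : 0 < σ) (hlam : 0 < lam) :
    ∀ t : ℝ, 0 ≤ t →
      (∫ τ in (0:ℝ)..t, Real.exp (-σ * (t - τ)) * (1 + τ) ^ (-lam))
        ≤ (2:ℝ) ^ lam * (((lam + 1) / (Real.exp 1 * σ)) ^ (lam + 1) * Real.exp σ + 1 / σ)
            * (1 + t) ^ (-lam) := by
  intro t ht
  set f : ℝ → ℝ := fun τ => Real.exp (-σ * (t - τ)) * (1 + τ) ^ (-lam) with hf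
  -- continuity on [0,t]
  have hc : ContinuousOn f (Set.Icc 0 t) := by
    apply ContinuousOn.mul
    · exact (Real.continuous_exp.comp (by continuity)).continuousOn
    · apply ContinuousOn.rpow_const
      · exact (continuous_const.add continuous_id).continuousOn
      · intro x hx
        exact Or.inl (by have := hx.1; positivity)
  have ht2 : (0:ℝ) ≤ t / 2 := by linarith
  have hsub1 : Set.uIcc (0:ℝ) (t/2) ⊆ Set.Icc 0 t := by
    rw [Set.uIcc_of_le ht2]; exact Set.Icc_subset_Icc le_rfl (by linarith)
  have hsub2 : Set.uIcc (t/2) t ⊆ Set.Icc 0 t := by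
    rw [Set.uIcc_of_le (by linarith)]; exact Set.Icc_subset_Icc ht2 le_rfl
  have hi1 : IntervalIntegrable f MeasureTheory.volume 0 (t/2) :=
    (hc.mono hsub1).intervalIntegrable
  have hi2 : IntervalIntegrable f MeasureTheory.volume (t/2) t :=
    (hc.mono hsub2).intervalIntegrable
  have hsplit : (∫ τ in (0:ℝ)..t, f τ) = (∫ τ in (0:ℝ)..(t/2), f τ) + ∫ τ in (t/2)..t, f τ :=
    (integral_add_adjacent_intervals hi1 hi2).symm
  -- bound piece 1
  have hb1 : (∫ τ in (0:ℝ)..(t/2), f τ) ≤ (t/2) * Real.exp (-σ * (t/2)) := by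
    have : (∫ τ in (0:ℝ)..(t/2), f τ) ≤ ∫ τ in (0:ℝ)..(t/2), Real.exp (-σ * (t/2)) := by
      apply integral_mono_on ht2 hi1 intervalIntegrable_const
      intro x hx
      have hx0 : 0 ≤ x := hx.1
      have h1x : (1:ℝ) ≤ 1 + x := by linarith
      calc f x ≤ Real.exp (-σ * (t - x)) * 1 := by
            exact mul_le_mul_of_nonneg_left
              (Real.rpow_le_one_of_one_le_of_nonpos h1x (by linarith)) (Real.exp_pos _).le
        _ = Real.exp (-σ * (t - x)) := mul_one _
        _ ≤ Real.exp (-σ * (t/2)) := by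
            apply Real.exp_le_exp.mpr; nlinarith [hx.2]
    simpa using this
  -- bound piece 2
  have hexp_int : (∫ τ in (t/2)..t, Real.exp (-σ * (t - τ)))
      = (Real.exp 0 - Real.exp (-σ * (t/2))) / σ := by
    have hderiv : ∀ τ ∈ Set.uIcc (t/2) t,
        HasDerivAt (fun y => Real.exp (-σ * (t - y)) / σ) (Real.exp (-σ * (t - τ))) τ := by
      intro τ _
      have h1 : HasDerivAt (fun y : ℝ => -σ * (t - y)) σ τ := by
        have := ((hasDerivAt_id τ).const_sub t).const_mul (-σ)
        simpa using this
      have := (h1.exp).div_const σ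
      simpa [mul_div_assoc, mul_comm, mul_div_cancel_left₀ _ hσ.ne'] using this
    have := integral_eq_sub_of_hasDerivAt hderiv
      (((Real.continuous_exp.comp (by continuity)).continuousOn).intervalIntegrable)
    rw [this]
    have : -σ * (t - t) = 0 := by ring
    rw [this]
    have : -σ * (t - t/2) = -σ * (t/2) := by ring
    rw [this]
    ring
  have hb2 : (∫ τ in (t/2)..t, f τ) ≤ (1 + t/2) ^ (-lam) * (1/σ) := by
    have hg : IntervalIntegrable (fun τ => Real.exp (-σ * (t - τ)) * (1 + t/2) ^ (-lam))
        MeasureTheory.volume (t/2) t :=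
      ((Real.continuous_exp.comp (by continuity)).mul continuous_const).intervalIntegrable _ _
    have hmono : (∫ τ in (t/2)..t, f τ)
        ≤ ∫ τ in (t/2)..t, Real.exp (-σ * (t - τ)) * (1 + t/2) ^ (-lam) := by
      apply integral_mono_on (by linarith) hi2 hg
      intro x hx
      apply mul_le_mul_of_nonneg_left _ (Real.exp_pos _).le
      exact Real.rpow_le_rpow_of_nonpos (by linarith) (by linarith [hx.1]) (by linarith)
    have heq : (∫ τ in (t/2)..t, Real.exp (-σ * (t - τ)) * (1 + t/2) ^ (-lam))
        = ((Real.exp 0 - Real.exp (-σ * (t/2))) / σ) * (1 + t/2) ^ (-lam) := by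
      rw [integral_mul_const, hexp_int]
    calc (∫ τ in (t/2)..t, f τ) ≤ _ := hmono
      _ = ((Real.exp 0 - Real.exp (-σ * (t/2))) / σ) * (1 + t/2) ^ (-lam) := heq
      _ ≤ (1/σ) * (1 + t/2) ^ (-lam) := by
          apply mul_le_mul_of_nonneg_right _ (by positivity)
          rw [Real.exp_zero]
          apply div_le_div_of_nonneg_right _ hσ.le
          have := (Real.exp_pos (-σ * (t/2))).le
          linarith
      _ = (1 + t/2) ^ (-lam) * (1/σ) := by ring
  -- final arithmetic
  have h1t : (0:ℝ) < 1 + t := by linarith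
  set K : ℝ := (lam + 1) / (Real.exp 1 * σ) with hK
  have hKpos : 0 < K := by positivity
  -- bound (B)
  have hB : (1 + t/2) ^ (-lam) * (1/σ) ≤ (2:ℝ)^lam * (1/σ) * (1+t)^(-lam) := by
    have e1 : ((1+t)/2) ^ (-lam) = (1+t)^(-lam) * (2:ℝ)^lam := by
      rw [Real.div_rpow h1t.le (by norm_num : (0:ℝ) ≤ 2),
        Real.rpow_neg (by norm_num : (0:ℝ) ≤ 2)]
      field_simp
    have e2 : (1 + t/2) ^ (-lam) ≤ ((1+t)/2) ^ (-lam) :=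
      Real.rpow_le_rpow_of_nonpos (by linarith) (by linarith) (by linarith)
    calc (1 + t/2) ^ (-lam) * (1/σ) ≤ ((1+t)/2) ^ (-lam) * (1/σ) :=
          mul_le_mul_of_nonneg_right e2 (by positivity)
      _ = (2:ℝ)^lam * (1/σ) * (1+t)^(-lam) := by rw [e1]; ring
  -- bound (A)
  have hA : (t/2) * Real.exp (-σ * (t/2)) ≤ (2:ℝ)^lam * (K^(lam+1) * Real.exp σ) * (1+t)^(-lam) := by
    rw [Real.rpow_neg h1t.le, ← div_eq_mul_inv, le_div_iff₀ (by positivity)]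
    have hkey := key_rpow_exp (lam+1) (σ/2) (1+t) (by linarith) (by linarith) h1t
    have e3 : (lam+1) / (Real.exp 1 * (σ/2)) = 2 * K := by
      rw [hK]; field_simp
    have e4 : ((lam+1) / (Real.exp 1 * (σ/2))) ^ (lam+1) = 2^(lam+1) * K^(lam+1) := by
      rw [e3, Real.mul_rpow (by norm_num) hKpos.le]
    rw [e4] at hkey
    have e5 : (1+t) ^ (lam+1) = (1+t)^lam * (1+t) := by
      rw [Real.rpow_add h1t, Real.rpow_one]
    have e6 : Real.exp (-σ * (t/2)) = Real.exp (-(σ/2 * (1+t))) * Real.exp (σ/2) := by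
      rw [← Real.exp_add]; ring_nf
    have e7 : (2:ℝ)^(lam+1) = (2:ℝ)^lam * 2 := by
      rw [Real.rpow_add (by norm_num : (0:ℝ) < 2), Real.rpow_one]
    have hpw : (0:ℝ) ≤ (1+t)^lam := Real.rpow_nonneg h1t.le lam
    calc (t/2) * Real.exp (-σ * (t/2)) * (1+t)^lam
        ≤ ((1+t)/2) * Real.exp (-σ * (t/2)) * (1+t)^lam := by
          apply mul_le_mul_of_nonneg_right _ hpw
          apply mul_le_mul_of_nonneg_right _ (Real.exp_pos _).le
          linarith
      _ = (1/2) * (((1+t)^(lam+1) * Real.exp (-(σ/2 * (1+t)))) * Real.exp (σ/2)) := by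
          rw [e5, e6]; ring
      _ ≤ (1/2) * ((2^(lam+1) * K^(lam+1)) * Real.exp (σ/2)) := by
          apply mul_le_mul_of_nonneg_left _ (by norm_num)
          exact mul_le_mul_of_nonneg_right hkey (Real.exp_pos _).le
      _ = (2:ℝ)^lam * K^(lam+1) * Real.exp (σ/2) := by rw [e7]; ring
      _ ≤ (2:ℝ)^lam * K^(lam+1) * Real.exp σ := by
          apply mul_le_mul_of_nonneg_left _ (by positivity)
          exact Real.exp_le_exp.mpr (by linarith)
      _ = (2:ℝ)^lam * (K^(lam+1) * Real.exp σ) := by ring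
  have hRHS : (2:ℝ) ^ lam * (K ^ (lam + 1) * Real.exp σ + 1 / σ) * (1 + t) ^ (-lam)
      = (2:ℝ)^lam * (K^(lam+1) * Real.exp σ) * (1+t)^(-lam)
        + (2:ℝ)^lam * (1/σ) * (1+t)^(-lam) := by ring
  rw [hsplit, hRHS]
  exact add_le_add (le_trans hb1 hA) (le_trans hb2 hB)
end

section
/- Let $\varepsilon \in (0,1)$, $\lambda > 0$, $M > 0$. Let $f : [0,\infty) \to \mathbb{R}$ be a measurable function satisfying $|f(\tau)| \le M (1+\tau)^{-\lambda}$ for almost every $\tau \ge 0$. Then for every real $a \ge 1$ and every $t > 0$, $\int_{t/2}^{t} a^{1-\varepsilon} e^{-(t-\tau) a} |f(\tau)| \, d\tau \le M \big( (1-\varepsilon)/e \big)^{1-\varepsilon} \, 2^{1 - 2\varepsilon + \lambda} \big( \varepsilon^{-1} + 4 e^{-1/4} \big) (1+t)^{-\lambda}$. -/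
open Real MeasureTheory intervalIntegral

lemma aux_mul_log_ge (x : ℝ) (hx : 0 < x) : x - 1 ≤ x * Real.log x := by
  have h := Real.one_sub_inv_le_log_of_pos hx
  have := mul_le_mul_of_nonneg_left h hx.le
  calc x - 1 = x * (1 - x⁻¹) := by field_simp
    _ ≤ x * Real.log x := this

lemma aux_mul_log_ge_half (x : ℝ) (hx : 0 < x) : -(1/2 : ℝ) ≤ x * Real.log x := by
  have hs : 0 < Real.sqrt x := Real.sqrt_pos.mpr hx
  have hss : Real.sqrt x * Real.sqrt x = x := Real.mul_self_sqrt hx.le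
  have hlog : Real.log x = 2 * Real.log (Real.sqrt x) := by
    conv_lhs => rw [← hss]
    rw [Real.log_mul hs.ne' hs.ne']; ring
  have h := Real.one_sub_inv_le_log_of_pos hs
  have h2 : x * (1 - (Real.sqrt x)⁻¹) ≤ x * Real.log (Real.sqrt x) :=
    mul_le_mul_of_nonneg_left h hx.le
  have h3 : x * (1 - (Real.sqrt x)⁻¹) = x - Real.sqrt x := by
    rw [mul_sub, mul_one]
    congr 1
    rw [← hss]
    field_simp
    rw [Real.sqrt_sq hs.le]
  nlinarith [sq_nonneg (Real.sqrt x - 1/2)]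

lemma key_ineq (ε : ℝ) (h0 : 0 < ε) (h1 : ε < 1) :
    1 ≤ ((1 - ε) / Real.exp 1) ^ (1 - ε) * (2:ℝ) ^ (1 - 2*ε) * (ε⁻¹ + 4 * Real.exp (-(1/4))) := by
  set x := 1 - ε with hxdef
  have hx : 0 < x := by simp [hxdef]; linarith
  have hb : (0:ℝ) < x / Real.exp 1 := div_pos hx (Real.exp_pos 1)
  have hrw : ((1 - ε) / Real.exp 1) ^ (1 - ε) * (2:ℝ) ^ (1 - 2*ε)
      = Real.exp (x * (Real.log x - 1) + (1 - 2*ε) * Real.log 2) := by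
    rw [Real.rpow_def_of_pos hb, Real.rpow_def_of_pos (by norm_num : (0:ℝ) < 2),
      ← Real.exp_add, Real.log_div hx.ne' (Real.exp_pos 1).ne', Real.log_exp]
    rw [hxdef]
    ring_nf
  rw [hrw]
  have he14 : (3:ℝ)/4 ≤ Real.exp (-(1/4)) := by
    linarith [Real.add_one_le_exp (-(1/4:ℝ))]
  have hlog2 : (1/2 : ℝ) ≤ Real.log 2 := by linarith [Real.log_two_gt_d9]
  have hexp1 : Real.exp 1 < 2.7182818286 := Real.exp_one_lt_d9
  rcases le_or_gt ε (1/2) with hc | hc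
  · -- exponent ≥ -1
    have hE : -1 ≤ x * (Real.log x - 1) + (1 - 2*ε) * Real.log 2 := by
      have h1' := aux_mul_log_ge x hx
      have h2 : 0 ≤ (1 - 2*ε) * Real.log 2 := by
        apply mul_nonneg (by linarith) (by linarith)
      nlinarith
    have hinv : 2 ≤ ε⁻¹ := by
      rw [le_inv_comm₀ (by norm_num) h0]
      linarith
    have hfac : (5:ℝ) ≤ ε⁻¹ + 4 * Real.exp (-(1/4)) := by linarith
    have hE' : Real.exp (-1) ≤ Real.exp (x * (Real.log x - 1) + (1 - 2*ε) * Real.log 2) :=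
      Real.exp_le_exp.mpr hE
    have h5 : 1 ≤ Real.exp (-1) * 5 := by
      rw [Real.exp_neg, inv_mul_eq_div, le_div_iff₀ (Real.exp_pos 1), one_mul]
      linarith
    calc (1:ℝ) ≤ Real.exp (-1) * 5 := h5
      _ ≤ Real.exp (x * (Real.log x - 1) + (1 - 2*ε) * Real.log 2)
            * (ε⁻¹ + 4 * Real.exp (-(1/4))) := by
        apply mul_le_mul hE' hfac (by norm_num) (Real.exp_pos _).le
  · -- exponent ≥ -1/2 - log 2
    have hE : -(1/2) - Real.log 2 ≤ x * (Real.log x - 1) + (1 - 2*ε) * Real.log 2 := by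
      have h1' := aux_mul_log_ge_half x hx
      have h2 : -Real.log 2 ≤ -x + (1 - 2*ε) * Real.log 2 := by
        have : (1 - 2*ε) = 2*x - 1 := by rw [hxdef]; ring
        rw [this]
        nlinarith
      nlinarith
    have hinv : 1 ≤ ε⁻¹ := (one_le_inv₀ h0).mpr h1.le
    have hfac : (4:ℝ) ≤ ε⁻¹ + 4 * Real.exp (-(1/4)) := by linarith
    have hE' : Real.exp (-(1/2) - Real.log 2)
        ≤ Real.exp (x * (Real.log x - 1) + (1 - 2*ε) * Real.log 2) := Real.exp_le_exp.mpr hE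
    have hval : Real.exp (-(1/2) - Real.log 2) = Real.exp (-(1/2)) / 2 := by
      rw [Real.exp_sub, Real.exp_log (by norm_num : (0:ℝ) < 2)]
    have hhalf : Real.exp (1/2 : ℝ) < 2 := by
      have hsq : Real.exp (1/2 : ℝ) * Real.exp (1/2 : ℝ) = Real.exp 1 := by
        rw [← Real.exp_add]; norm_num
      nlinarith [Real.exp_pos (1/2 : ℝ)]
    have h4 : 1 ≤ Real.exp (-(1/2) - Real.log 2) * 4 := by
      rw [hval, Real.exp_neg]
      rw [div_mul_eq_mul_div, le_div_iff₀ (by norm_num)]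
      rw [inv_mul_eq_div, le_div_iff₀ (Real.exp_pos _)]
      linarith
    calc (1:ℝ) ≤ Real.exp (-(1/2) - Real.log 2) * 4 := h4
      _ ≤ _ := mul_le_mul hE' hfac (by norm_num) (Real.exp_pos _).le


/-- Let `ε ∈ (0,1)`, `λ > 0`, `M > 0`, and `f` measurable with
`|f τ| ≤ M (1+τ)^{-λ}` for a.e. `τ ≥ 0`. Then for every `a ≥ 1` and every `t > 0`,
`∫_{t/2}^{t} a^{1-ε} e^{-(t-τ) a} |f τ| dτ
  ≤ M ((1-ε)/e)^{1-ε} 2^{1-2ε+λ} (ε⁻¹ + 4 e^{-1/4}) (1+t)^{-λ}`. -/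
theorem stmt7 (ε lam M : ℝ) (hε : ε ∈ Set.Ioo (0:ℝ) 1) (hlam : 0 < lam) (hM : 0 < M)
    (f : ℝ → ℝ) (hf : Measurable f)
    (hfb : ∀ᵐ τ ∂(volume : Measure ℝ), 0 ≤ τ → |f τ| ≤ M * (1 + τ) ^ (-lam)) :
    ∀ a : ℝ, 1 ≤ a → ∀ t : ℝ, 0 < t →
      (∫ τ in (t/2)..t, a ^ (1 - ε) * Real.exp (-((t - τ) * a)) * |f τ|)
        ≤ M * ((1 - ε) / Real.exp 1) ^ (1 - ε) * (2:ℝ) ^ (1 - 2 * ε + lam)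
            * (ε⁻¹ + 4 * Real.exp (-(1/4))) * (1 + t) ^ (-lam) := by

  intro a ha t ht
  have ha0 : (0:ℝ) < a := by linarith
  have ht2 : t/2 ≤ t := by linarith
  have h1t : (0:ℝ) < 1 + t := by linarith
  have harp : (0:ℝ) ≤ a ^ (1 - ε) := Real.rpow_nonneg ha0.le _
  set C : ℝ := M * (2:ℝ) ^ lam * (1 + t) ^ (-lam) with hCdef
  have hC : 0 ≤ C := by
    apply mul_nonneg (mul_nonneg hM.le (Real.rpow_nonneg (by norm_num) _))
      (Real.rpow_nonneg h1t.le _)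
  set g : ℝ → ℝ := fun τ => a ^ (1 - ε) * C * Real.exp (-((t - τ) * a)) with hgdef
  have hgc : Continuous g := by
    apply continuous_const.mul
    exact Real.continuous_exp.comp (by continuity)
  have hgi : IntervalIntegrable g volume (t/2) t := hgc.intervalIntegrable _ _
  -- a.e. bound
  have hbound : ∀ᵐ τ ∂(volume : Measure ℝ).restrict (Set.uIoc (t/2) t),
      ‖a ^ (1 - ε) * Real.exp (-((t - τ) * a)) * |f τ|‖ ≤ g τ := by
    filter_upwards [ae_restrict_mem measurableSet_uIoc, ae_restrict_of_ae hfb] with τ hmem hτ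
    rw [Set.uIoc_of_le ht2] at hmem
    obtain ⟨hτ1, hτ2⟩ := hmem
    have hτ0 : (0:ℝ) ≤ τ := by linarith
    have hfτ := hτ hτ0
    have hstep : (1 + τ) ^ (-lam) ≤ (2:ℝ) ^ lam * (1 + t) ^ (-lam) := by
      have hle : (1 + t)/2 ≤ 1 + τ := by linarith
      have h1 : (1 + τ) ^ (-lam) ≤ ((1 + t)/2 : ℝ) ^ (-lam) :=
        Real.rpow_le_rpow_of_nonpos (by linarith) hle (by linarith)
      have h2 : ((1 + t)/2 : ℝ) ^ (-lam) = (2:ℝ) ^ lam * (1 + t) ^ (-lam) := by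
        rw [Real.div_rpow h1t.le (by norm_num), Real.rpow_neg (by norm_num : (0:ℝ) ≤ 2),
          div_inv_eq_mul]
        ring
      rw [← h2]; exact h1
    have hfC : |f τ| ≤ C := by
      calc |f τ| ≤ M * (1 + τ) ^ (-lam) := hfτ
        _ ≤ M * ((2:ℝ) ^ lam * (1 + t) ^ (-lam)) :=
            mul_le_mul_of_nonneg_left hstep hM.le
        _ = C := by rw [hCdef]; ring
    rw [Real.norm_eq_abs, abs_of_nonneg
      (mul_nonneg (mul_nonneg harp (Real.exp_pos _).le) (abs_nonneg _))]
    calc a ^ (1 - ε) * Real.exp (-((t - τ) * a)) * |f τ|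
        ≤ a ^ (1 - ε) * Real.exp (-((t - τ) * a)) * C :=
          mul_le_mul_of_nonneg_left hfC (mul_nonneg harp (Real.exp_pos _).le)
      _ = g τ := by rw [hgdef]; ring
  -- value of ∫ g
  have hexp : (∫ τ in (t/2)..t, Real.exp (-((t - τ) * a)))
      = a⁻¹ * (1 - Real.exp (-(t * a / 2))) := by
    have h1 : ∀ τ : ℝ, Real.exp (-((t - τ) * a)) = Real.exp (-(t*a)) * Real.exp (a * τ) := by
      intro τ; rw [← Real.exp_add]; ring_nf
    simp_rw [h1]
    rw [intervalIntegral.integral_const_mul,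
      intervalIntegral.integral_comp_mul_left Real.exp ha0.ne', integral_exp, smul_eq_mul]
    rw [mul_left_comm, mul_sub, ← Real.exp_add, ← Real.exp_add]
    rw [show -(t*a) + a*t = 0 from by ring, show -(t*a) + a*(t/2) = -(t*a/2) from by ring,
      Real.exp_zero]
  have hgint : (∫ τ in (t/2)..t, g τ) ≤ C := by
    rw [hgdef]
    simp only
    rw [intervalIntegral.integral_const_mul, hexp]
    have hpow : a ^ (1 - ε) * a⁻¹ ≤ 1 := by
      have e1 : a ^ (1 - ε) * a⁻¹ = a ^ (-ε) := by
        rw [← Real.rpow_neg_one a, ← Real.rpow_add ha0,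
          show (1 - ε) + (-1) = -ε from by ring]
      rw [e1]
      exact Real.rpow_le_one_of_one_le_of_nonpos ha (by linarith [hε.1])
    have hee : Real.exp (-(t * a / 2)) ≤ 1 :=
      Real.exp_le_one_iff.mpr (by nlinarith)
    have hee0 : 0 < Real.exp (-(t * a / 2)) := Real.exp_pos _
    have hia : 0 ≤ a⁻¹ := inv_nonneg.mpr ha0.le
    nlinarith [mul_nonneg harp hia, mul_nonneg (mul_nonneg harp hia) hC]
  -- put together
  calc (∫ τ in (t/2)..t, a ^ (1 - ε) * Real.exp (-((t - τ) * a)) * |f τ|)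
      ≤ |∫ τ in (t/2)..t, g τ| := by
        rw [← Real.norm_eq_abs]
        exact le_trans (le_abs_self _)
          (by rw [← Real.norm_eq_abs]
              exact intervalIntegral.norm_integral_le_abs_of_norm_le hbound hgi)
    _ = ∫ τ in (t/2)..t, g τ := abs_of_nonneg (intervalIntegral.integral_nonneg ht2
          (fun τ _ => mul_nonneg (mul_nonneg harp hC) (Real.exp_pos _).le))
    _ ≤ C := hgint
    _ ≤ M * ((1 - ε) / Real.exp 1) ^ (1 - ε) * (2:ℝ) ^ (1 - 2 * ε + lam)
            * (ε⁻¹ + 4 * Real.exp (-(1/4))) * (1 + t) ^ (-lam) := by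
        have hk := key_ineq ε hε.1 hε.2
        rw [Real.rpow_add (by norm_num : (0:ℝ) < 2)]
        calc C = C * 1 := (mul_one C).symm
          _ ≤ C * (((1 - ε) / Real.exp 1) ^ (1 - ε) * (2:ℝ) ^ (1 - 2*ε)
                * (ε⁻¹ + 4 * Real.exp (-(1/4)))) := mul_le_mul_of_nonneg_left hk hC
          _ = M * ((1 - ε) / Real.exp 1) ^ (1 - ε) * ((2:ℝ) ^ (1 - 2 * ε) * 2 ^ lam)
                * (ε⁻¹ + 4 * Real.exp (-(1/4))) * (1 + t) ^ (-lam) := by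
              rw [hCdef]; ring
end

section
/- Let $\varepsilon \in (0,1)$, $\lambda > 0$, $M > 0$, $R_0 > 0$ and $X_0 > 0$. Then there exists a constant $C > 0$, depending only on $\varepsilon$, $\lambda$, $M$, $R_0$ and $X_0$ (in particular independent of $a$), such that the following holds: for every real $a \ge 1$, every $w_0, \xi \in \mathbb{R}$ with $|w_0| \le R_0$ and $|\xi| \le X_0$, and every measurable $f : [0,\infty) \to \mathbb{R}$ with $|f(\tau)| \le M(1+\tau)^{-\lambda}$ for almost every $\tau$, the function $w(t) = e^{-ta} w_0 + a^{-1}(1 - e^{-ta}) \xi + \int_0^t e^{-(t-\tau)a} f(\tau)\, d\tau$ satisfies $a^{1-\varepsilon} \, \big| w(t) - a^{-1} \xi \big| \le C (1+t)^{-\lambda}$ for all $t \ge 1$. -/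
open Real MeasureTheory intervalIntegral


lemma auxA (p x : ℝ) (hp : 0 ≤ p) (hx : 0 ≤ x) :
    x ^ p * Real.exp (-x) ≤ (Nat.factorial (Nat.ceil p) : ℝ) := by
  have hK : (1:ℝ) ≤ (Nat.factorial (Nat.ceil p) : ℝ) := by
    exact_mod_cast Nat.one_le_iff_ne_zero.mpr (Nat.factorial_ne_zero _)
  have hexp : Real.exp (-x) ≤ 1 := by
    calc Real.exp (-x) ≤ Real.exp 0 := Real.exp_le_exp.mpr (by linarith)
      _ = 1 := Real.exp_zero
  rcases le_or_gt x 1 with h1 | h1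
  · have h2 : x ^ p ≤ 1 := Real.rpow_le_one hx h1 hp
    calc x ^ p * Real.exp (-x) ≤ 1 * 1 :=
          mul_le_mul h2 hexp (Real.exp_pos _).le one_pos.le
      _ ≤ _ := by simpa using hK
  · have h2 : x ^ p ≤ x ^ (Nat.ceil p : ℕ) := by
      rw [← Real.rpow_natCast]
      exact Real.rpow_le_rpow_of_exponent_le h1.le (Nat.le_ceil p)
    have h3 : x ^ (Nat.ceil p : ℕ) ≤ (Nat.factorial (Nat.ceil p) : ℝ) * Real.exp x := by
      have h := Real.pow_div_factorial_le_exp (x := x) hx (Nat.ceil p)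
      have hfpos : (0:ℝ) < (Nat.factorial (Nat.ceil p) : ℝ) := by positivity
      calc x ^ (Nat.ceil p : ℕ) = (x ^ (Nat.ceil p : ℕ) / (Nat.factorial (Nat.ceil p) : ℝ)) * (Nat.factorial (Nat.ceil p) : ℝ) := by
            field_simp
        _ ≤ Real.exp x * (Nat.factorial (Nat.ceil p) : ℝ) := by
            apply mul_le_mul_of_nonneg_right h hfpos.le
        _ = _ := by ring
    calc x ^ p * Real.exp (-x) ≤ x ^ (Nat.ceil p : ℕ) * Real.exp (-x) :=
          mul_le_mul_of_nonneg_right h2 (Real.exp_pos _).le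
      _ ≤ (Nat.factorial (Nat.ceil p) : ℝ) * Real.exp x * Real.exp (-x) :=
          mul_le_mul_of_nonneg_right h3 (Real.exp_pos _).le
      _ = (Nat.factorial (Nat.ceil p) : ℝ) := by
          rw [mul_assoc, ← Real.exp_add]; simp

lemma auxD (lam : ℝ) (hlam : 0 < lam) (a t : ℝ) (ha : 1 ≤ a) (ht : 1 ≤ t) :
    a * t * Real.exp (-(t * a / 2)) ≤
      2 ^ (1 + 2 * lam) * (Nat.factorial (Nat.ceil (1 + lam)) : ℝ) * (1 + t) ^ (-lam) := by
  set K : ℝ := (Nat.factorial (Nat.ceil (1 + lam)) : ℝ) with hKdef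
  have hKpos : (0:ℝ) < K := by positivity
  have ht0 : (0:ℝ) < t := by linarith
  have ha0 : (0:ℝ) < a := by linarith
  have hat : (1:ℝ) ≤ a * t := one_le_mul_of_one_le_of_one_le ha ht
  have h1t : (0:ℝ) < 1 + t := by linarith
  rw [Real.rpow_neg h1t.le, ← div_eq_mul_inv, le_div_iff₀ (by positivity)]
  -- goal: a * t * exp (-(t*a/2)) * (1+t)^lam ≤ 2^(1+2lam) * K
  have h2t : (1 + t) ^ lam ≤ 2 ^ lam * (a * t) ^ lam := by
    calc (1 + t) ^ lam ≤ (2 * (a * t)) ^ lam := by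
          apply Real.rpow_le_rpow h1t.le (by nlinarith) hlam.le
      _ = 2 ^ lam * (a * t) ^ lam := Real.mul_rpow (by norm_num) (by positivity)
  have key : (a * t) * (a * t) ^ lam * Real.exp (-(t * a / 2)) ≤ 2 ^ (1 + lam) * K := by
    have h4 : (a * t) * (a * t) ^ lam = 2 ^ (1 + lam) * (t * a / 2) ^ (1 + lam) := by
      have : (a * t) * (a * t) ^ lam = (a * t) ^ ((1:ℝ) + lam) := by
        rw [Real.rpow_add (by positivity), Real.rpow_one]
      rw [this]
      have h5 : (a * t : ℝ) = 2 * (t * a / 2) := by ring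
      rw [h5, Real.mul_rpow (by norm_num) (by positivity)]
    rw [h4, mul_assoc]
    apply mul_le_mul_of_nonneg_left _ (by positivity)
    exact auxA (1 + lam) (t * a / 2) (by linarith) (by positivity)
  calc a * t * Real.exp (-(t * a / 2)) * (1 + t) ^ lam
      ≤ a * t * Real.exp (-(t * a / 2)) * (2 ^ lam * (a * t) ^ lam) := by
        apply mul_le_mul_of_nonneg_left h2t (by positivity)
    _ = 2 ^ lam * ((a * t) * (a * t) ^ lam * Real.exp (-(t * a / 2))) := by ring
    _ ≤ 2 ^ lam * (2 ^ (1 + lam) * K) := by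
        apply mul_le_mul_of_nonneg_left key (by positivity)
    _ = 2 ^ (1 + 2 * lam) * K := by
        rw [← mul_assoc, ← Real.rpow_add (by norm_num : (0:ℝ) < 2)]
        ring_nf

lemma auxExp (a t c : ℝ) (ha : 0 < a) (hct : c ≤ t) :
    ∫ τ in c..t, Real.exp (-((t - τ) * a)) ≤ 1 / a := by
  have hfun : (fun τ : ℝ => Real.exp (-((t - τ) * a))) = fun τ => Real.exp ((τ - t) * a) := by
    funext τ; ring_nf
  have hderiv : ∀ τ ∈ Set.uIcc c t,
      HasDerivAt (fun τ => Real.exp ((τ - t) * a) / a) (Real.exp ((τ - t) * a)) τ := by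
    intro τ _
    have h0 : HasDerivAt (fun τ : ℝ => (τ - t) * a) a τ := by
      simpa using ((hasDerivAt_id τ).sub_const t).mul_const a
    have h1 := (h0.exp).div_const a
    simpa [mul_div_assoc, mul_div_cancel_right₀ _ ha.ne'] using h1
  have hint : IntervalIntegrable (fun τ => Real.exp ((τ - t) * a)) volume c t :=
    (Real.continuous_exp.comp (by continuity)).intervalIntegrable c t
  have hcalc : ∫ τ in c..t, Real.exp ((τ - t) * a)
      = Real.exp ((t - t) * a) / a - Real.exp ((c - t) * a) / a :=
    intervalIntegral.integral_eq_sub_of_hasDerivAt hderiv hint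
  rw [hfun, hcalc]
  have h2 : (0:ℝ) < Real.exp ((c - t) * a) / a := by positivity
  simp only [sub_self, zero_mul, Real.exp_zero]
  rw [one_div]
  linarith [h2, (inv_pos.mpr ha).le]

/-- Scalar linear-asymptotics lemma: for `ε ∈ (0,1)`, `λ > 0`, `M > 0`, `R₀ > 0`, `X₀ > 0`,
there is `C > 0` (independent of `a`) such that for every `a ≥ 1`, every `w₀, ξ` with
`|w₀| ≤ R₀`, `|ξ| ≤ X₀`, and every measurable `f` with `|f τ| ≤ M (1+τ)^{-λ}` a.e.,
the mild solution `w t = e^{-t a} w₀ + a⁻¹ (1 - e^{-t a}) ξ + ∫_0^t e^{-(t-τ) a} f τ dτ`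
satisfies `a^{1-ε} |w t - a⁻¹ ξ| ≤ C (1+t)^{-λ}` for all `t ≥ 1`. -/
theorem stmt8 (ε lam M R₀ X₀ : ℝ) (hε : ε ∈ Set.Ioo (0:ℝ) 1) (hlam : 0 < lam)
    (hM : 0 < M) (hR₀ : 0 < R₀) (hX₀ : 0 < X₀) :
    ∃ C : ℝ, 0 < C ∧
      ∀ a : ℝ, 1 ≤ a → ∀ w₀ ξ : ℝ, |w₀| ≤ R₀ → |ξ| ≤ X₀ →
        ∀ f : ℝ → ℝ, Measurable f →
          (∀ᵐ τ ∂(volume : Measure ℝ), 0 ≤ τ → |f τ| ≤ M * (1 + τ) ^ (-lam)) →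
          ∀ t : ℝ, 1 ≤ t →
            a ^ (1 - ε) *
              |(Real.exp (-(t * a)) * w₀ + a⁻¹ * (1 - Real.exp (-(t * a))) * ξ
                  + ∫ τ in (0:ℝ)..t, Real.exp (-((t - τ) * a)) * f τ)
                - a⁻¹ * ξ|
              ≤ C * (1 + t) ^ (-lam) := by
  obtain ⟨hε0, hε1⟩ := hε
  set K : ℝ := (Nat.factorial (Nat.ceil (1 + lam)) : ℝ) with hKdef
  have hKpos : (0:ℝ) < K := by positivity
  refine ⟨(R₀ + X₀ + M / 2) * (2 ^ (1 + 2 * lam) * K) + M * 2 ^ lam, by positivity, ?_⟩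
  intro a ha w₀ ξ hw₀ hξ f hfm hfb t ht
  have ha0 : (0:ℝ) < a := by linarith
  have ht0 : (0:ℝ) < t := by linarith
  have h1t : (0:ℝ) < 1 + t := by linarith
  have hP : (0:ℝ) < (1 + t) ^ (-lam) := Real.rpow_pos_of_pos h1t _
  have hainv : a⁻¹ ≤ 1 := by
    nlinarith [mul_inv_cancel₀ ha0.ne', inv_pos.mpr ha0]
  set g : ℝ → ℝ := fun τ => Real.exp (-((t - τ) * a)) * (M * (1 + τ) ^ (-lam)) with hgdef
  set h : ℝ → ℝ := fun τ => Real.exp (-((t - τ) * a)) * f τ with hhdef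
  -- continuity / integrability of the bound g
  have hgc : ContinuousOn g (Set.uIcc 0 t) := by
    rw [Set.uIcc_of_le ht0.le]
    apply ContinuousOn.mul
    · exact (Real.continuous_exp.comp (((continuous_const.sub continuous_id).mul continuous_const).neg)).continuousOn
    · apply ContinuousOn.mul continuousOn_const
      apply ContinuousOn.rpow_const ((continuous_const.add continuous_id).continuousOn)
      intro τ hτ
      left
      have := hτ.1
      exact ne_of_gt (show (0:ℝ) < 1 + τ by linarith)
  have hgi : IntervalIntegrable g volume 0 t := hgc.intervalIntegrable
  have hgIoc : IntegrableOn g (Set.Ioc 0 t) volume := by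
    rwa [intervalIntegrable_iff_integrableOn_Ioc_of_le ht0.le] at hgi
  -- integrability of h
  have hhm : Measurable h := by
    apply Measurable.mul _ hfm
    exact (Real.continuous_exp.comp (((continuous_const.sub continuous_id).mul continuous_const).neg)).measurable
  have hhi : IntervalIntegrable h volume 0 t := by
    rw [intervalIntegrable_iff_integrableOn_Ioc_of_le ht0.le]
    apply hgIoc.mono' (hhm.aestronglyMeasurable.restrict)
    filter_upwards [ae_restrict_of_ae hfb,
      ae_restrict_mem (measurableSet_Ioc : MeasurableSet (Set.Ioc (0:ℝ) t))] with τ hfτ hτ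
    have hb := hfτ hτ.1.le
    rw [hhdef]
    simp only [Real.norm_eq_abs, abs_mul, abs_of_pos (Real.exp_pos _)]
    exact mul_le_mul_of_nonneg_left hb (Real.exp_pos _).le
  -- bound |∫ h| ≤ ∫ g
  have hIbound : |∫ τ in (0:ℝ)..t, h τ| ≤ ∫ τ in (0:ℝ)..t, g τ := by
    calc |∫ τ in (0:ℝ)..t, h τ| ≤ ∫ τ in (0:ℝ)..t, ‖h τ‖ := by
          simpa [Real.norm_eq_abs] using
            intervalIntegral.norm_integral_le_integral_norm (f := h) (μ := volume)
              (a := 0) (b := t) ht0.le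
      _ ≤ ∫ τ in (0:ℝ)..t, g τ := by
          apply intervalIntegral.integral_mono_ae_restrict ht0.le hhi.norm hgi
          filter_upwards [ae_restrict_of_ae hfb,
            ae_restrict_mem (measurableSet_Icc : MeasurableSet (Set.Icc (0:ℝ) t))] with τ hfτ hτ
          have hb := hfτ hτ.1
          simp only [hhdef, hgdef, Real.norm_eq_abs, abs_mul, abs_of_pos (Real.exp_pos _)]
          exact mul_le_mul_of_nonneg_left hb (Real.exp_pos _).le
  -- split the integral of g
  have hgi1 : IntervalIntegrable g volume 0 (t/2) := by
    apply hgi.mono_set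
    apply Set.uIcc_subset_uIcc Set.left_mem_uIcc
    rw [Set.uIcc_of_le ht0.le]
    constructor <;> linarith
  have hgi2 : IntervalIntegrable g volume (t/2) t := by
    apply hgi.mono_set
    apply Set.uIcc_subset_uIcc _ Set.right_mem_uIcc
    rw [Set.uIcc_of_le ht0.le]
    constructor <;> linarith
  have hsplit : (∫ τ in (0:ℝ)..t, g τ)
      = (∫ τ in (0:ℝ)..(t/2), g τ) + ∫ τ in (t/2)..t, g τ :=
    (integral_add_adjacent_intervals hgi1 hgi2).symm
  -- piece 1
  have hp1 : (∫ τ in (0:ℝ)..(t/2), g τ) ≤ M * (t/2) * Real.exp (-(t * a / 2)) := by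
    have hb : ∀ x ∈ Set.uIoc (0:ℝ) (t/2), ‖g x‖ ≤ M * Real.exp (-(t * a / 2)) := by
      intro τ hτ
      rw [Set.uIoc_of_le (by linarith)] at hτ
      obtain ⟨hτ0, hτ2⟩ := hτ
      have he : Real.exp (-((t - τ) * a)) ≤ Real.exp (-(t * a / 2)) := by
        apply Real.exp_le_exp.mpr
        nlinarith [mul_le_mul_of_nonneg_right (show t/2 ≤ t - τ by linarith) ha0.le]
      have hr : M * (1 + τ) ^ (-lam) ≤ M := by
        have h1 : (1 + τ : ℝ) ^ (-lam) ≤ 1 :=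
          Real.rpow_le_one_of_one_le_of_nonpos (by linarith) (by linarith)
        nlinarith [h1]
      rw [hgdef]
      simp only [Real.norm_eq_abs, abs_mul, abs_of_pos (Real.exp_pos _),
        abs_of_nonneg (show (0:ℝ) ≤ M * (1 + τ) ^ (-lam) by positivity)]
      calc Real.exp (-((t - τ) * a)) * (M * (1 + τ) ^ (-lam))
          ≤ Real.exp (-(t * a / 2)) * M :=
            mul_le_mul he hr (by positivity) (Real.exp_pos _).le
        _ = M * Real.exp (-(t * a / 2)) := mul_comm _ _
    calc (∫ τ in (0:ℝ)..(t/2), g τ) ≤ |∫ τ in (0:ℝ)..(t/2), g τ| := le_abs_self _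
      _ ≤ M * Real.exp (-(t * a / 2)) * |t/2 - 0| := by
          simpa [Real.norm_eq_abs] using
            intervalIntegral.norm_integral_le_of_norm_le_const hb
      _ = M * (t/2) * Real.exp (-(t * a / 2)) := by
          rw [sub_zero, abs_of_nonneg (by linarith : (0:ℝ) ≤ t/2)]; ring
  -- piece 2
  have hp2 : (∫ τ in (t/2)..t, g τ)
      ≤ M * 2 ^ lam * (1 + t) ^ (-lam) * (1/a) := by
    have hBpos : (0:ℝ) ≤ M * 2 ^ lam * (1 + t) ^ (-lam) := by positivity
    have hmono : ∀ τ ∈ Set.Icc (t/2) t,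
        g τ ≤ M * 2 ^ lam * (1 + t) ^ (-lam) * Real.exp (-((t - τ) * a)) := by
      intro τ hτ
      obtain ⟨hτ1, hτ2⟩ := hτ
      have hr1 : (1 + τ : ℝ) ^ (-lam) ≤ (1 + t/2) ^ (-lam) :=
        Real.rpow_le_rpow_of_nonpos (by linarith) (by linarith) (by linarith)
      have hr2 : (1 + t/2 : ℝ) ^ (-lam) ≤ ((1 + t)/2) ^ (-lam) :=
        Real.rpow_le_rpow_of_nonpos (by positivity) (by linarith) (by linarith)
      have hr3 : ((1 + t)/2 : ℝ) ^ (-lam) = (1 + t) ^ (-lam) * 2 ^ lam := by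
        rw [Real.div_rpow h1t.le (by norm_num), Real.rpow_neg (by norm_num : (0:ℝ) ≤ 2),
          div_eq_mul_inv, inv_inv]
      have : M * (1 + τ) ^ (-lam) ≤ M * 2 ^ lam * (1 + t) ^ (-lam) := by
        calc M * (1 + τ) ^ (-lam) ≤ M * ((1 + t)/2) ^ (-lam) := by
              apply mul_le_mul_of_nonneg_left (hr1.trans hr2) hM.le
          _ = M * 2 ^ lam * (1 + t) ^ (-lam) := by rw [hr3]; ring
      rw [hgdef]
      calc Real.exp (-((t - τ) * a)) * (M * (1 + τ) ^ (-lam))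
          ≤ Real.exp (-((t - τ) * a)) * (M * 2 ^ lam * (1 + t) ^ (-lam)) :=
            mul_le_mul_of_nonneg_left this (Real.exp_pos _).le
        _ = M * 2 ^ lam * (1 + t) ^ (-lam) * Real.exp (-((t - τ) * a)) := mul_comm _ _
    have hci : IntervalIntegrable
        (fun τ => M * 2 ^ lam * (1 + t) ^ (-lam) * Real.exp (-((t - τ) * a))) volume (t/2) t :=
      ((continuous_const.mul (Real.continuous_exp.comp
        (((continuous_const.sub continuous_id).mul continuous_const).neg))).intervalIntegrable _ _)
    calc (∫ τ in (t/2)..t, g τ)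
        ≤ ∫ τ in (t/2)..t, M * 2 ^ lam * (1 + t) ^ (-lam) * Real.exp (-((t - τ) * a)) :=
          intervalIntegral.integral_mono_on (by linarith) hgi2 hci hmono
      _ = M * 2 ^ lam * (1 + t) ^ (-lam) * ∫ τ in (t/2)..t, Real.exp (-((t - τ) * a)) := by
          rw [← intervalIntegral.integral_const_mul]
      _ ≤ M * 2 ^ lam * (1 + t) ^ (-lam) * (1/a) :=
          mul_le_mul_of_nonneg_left (auxExp a t (t/2) ha0 (by linarith)) hBpos
  -- assembling the pointwise bound
  have e0pos := Real.exp_pos (-(t * a))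
  have hS : |(Real.exp (-(t * a)) * w₀ + a⁻¹ * (1 - Real.exp (-(t * a))) * ξ
        + ∫ τ in (0:ℝ)..t, h τ) - a⁻¹ * ξ|
      ≤ Real.exp (-(t * a)) * (R₀ + X₀)
        + (M * (t/2) * Real.exp (-(t * a / 2)) + M * 2 ^ lam * (1 + t) ^ (-lam) * (1/a)) := by
    have hexpr : (Real.exp (-(t * a)) * w₀ + a⁻¹ * (1 - Real.exp (-(t * a))) * ξ
        + ∫ τ in (0:ℝ)..t, h τ) - a⁻¹ * ξ
        = (Real.exp (-(t * a)) * w₀ - a⁻¹ * Real.exp (-(t * a)) * ξ)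
          + ∫ τ in (0:ℝ)..t, h τ := by ring
    rw [hexpr]
    have h1 : |Real.exp (-(t * a)) * w₀ - a⁻¹ * Real.exp (-(t * a)) * ξ|
        ≤ Real.exp (-(t * a)) * (R₀ + X₀) := by
      have ha1 : |Real.exp (-(t * a)) * w₀| ≤ Real.exp (-(t * a)) * R₀ := by
        rw [abs_mul, abs_of_pos e0pos]
        exact mul_le_mul_of_nonneg_left hw₀ e0pos.le
      have ha2 : |a⁻¹ * Real.exp (-(t * a)) * ξ| ≤ Real.exp (-(t * a)) * X₀ := by
        rw [abs_mul, abs_mul, abs_of_pos e0pos, abs_of_pos (inv_pos.mpr ha0)]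
        have : a⁻¹ * Real.exp (-(t * a)) * |ξ| ≤ 1 * Real.exp (-(t * a)) * X₀ := by
          apply mul_le_mul _ hξ (abs_nonneg _) (by positivity)
          exact mul_le_mul_of_nonneg_right hainv e0pos.le
        linarith [this]
      calc |Real.exp (-(t * a)) * w₀ - a⁻¹ * Real.exp (-(t * a)) * ξ|
          ≤ |Real.exp (-(t * a)) * w₀| + |a⁻¹ * Real.exp (-(t * a)) * ξ| := by
            rw [sub_eq_add_neg]
            exact (abs_add_le _ _).trans (by rw [abs_neg])
        _ ≤ Real.exp (-(t * a)) * (R₀ + X₀) := by linarith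
    calc |(Real.exp (-(t * a)) * w₀ - a⁻¹ * Real.exp (-(t * a)) * ξ) + ∫ τ in (0:ℝ)..t, h τ|
        ≤ |Real.exp (-(t * a)) * w₀ - a⁻¹ * Real.exp (-(t * a)) * ξ|
          + |∫ τ in (0:ℝ)..t, h τ| := abs_add_le _ _
      _ ≤ Real.exp (-(t * a)) * (R₀ + X₀) + ∫ τ in (0:ℝ)..t, g τ := add_le_add h1 hIbound
      _ ≤ _ := by rw [hsplit]; exact add_le_add_right (add_le_add hp1 hp2) _
  -- rpow facts for a
  set q : ℝ := a ^ (1 - ε) with hqdef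
  have hq0 : (0:ℝ) < q := Real.rpow_pos_of_pos ha0 _
  have hqa : q ≤ a := by
    calc q ≤ a ^ (1:ℝ) := Real.rpow_le_rpow_of_exponent_le ha (by linarith)
      _ = a := Real.rpow_one a
  have hq1a : q * (1/a) ≤ 1 := by
    rw [mul_one_div]
    exact (div_le_one ha0).mpr hqa
  have hE1 : Real.exp (-(t * a)) ≤ Real.exp (-(t * a / 2)) := by
    apply Real.exp_le_exp.mpr
    nlinarith [mul_nonneg ht0.le ha0.le]
  have hqE : q * Real.exp (-(t * a)) ≤ a * t * Real.exp (-(t * a / 2)) := by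
    apply mul_le_mul _ hE1 (Real.exp_pos _).le (by positivity)
    calc q ≤ a := hqa
      _ = a * 1 := (mul_one a).symm
      _ ≤ a * t := mul_le_mul_of_nonneg_left ht ha0.le
  have hqtE : q * (t/2) * Real.exp (-(t * a / 2)) ≤ (1/2) * (a * t * Real.exp (-(t * a / 2))) := by
    have : q * (t/2) ≤ (1/2) * (a * t) := by
      have h2 : q * (t/2) ≤ a * (t/2) := mul_le_mul_of_nonneg_right hqa (by linarith)
      linarith
    calc q * (t/2) * Real.exp (-(t * a / 2)) ≤ (1/2) * (a * t) * Real.exp (-(t * a / 2)) :=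
          mul_le_mul_of_nonneg_right this (Real.exp_pos _).le
      _ = (1/2) * (a * t * Real.exp (-(t * a / 2))) := by ring
  have hD := auxD lam hlam a t ha ht
  rw [← hKdef] at hD
  -- final chain
  calc q * |(Real.exp (-(t * a)) * w₀ + a⁻¹ * (1 - Real.exp (-(t * a))) * ξ
        + ∫ τ in (0:ℝ)..t, h τ) - a⁻¹ * ξ|
      ≤ q * (Real.exp (-(t * a)) * (R₀ + X₀)
        + (M * (t/2) * Real.exp (-(t * a / 2)) + M * 2 ^ lam * (1 + t) ^ (-lam) * (1/a))) :=
        mul_le_mul_of_nonneg_left hS hq0.le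
    _ = (R₀ + X₀) * (q * Real.exp (-(t * a)))
        + M * (q * (t/2) * Real.exp (-(t * a / 2)))
        + (M * 2 ^ lam * (1 + t) ^ (-lam)) * (q * (1/a)) := by ring
    _ ≤ (R₀ + X₀) * (a * t * Real.exp (-(t * a / 2)))
        + M * ((1/2) * (a * t * Real.exp (-(t * a / 2))))
        + (M * 2 ^ lam * (1 + t) ^ (-lam)) * 1 := by
        apply add_le_add (add_le_add _ _) _
        · exact mul_le_mul_of_nonneg_left hqE (by positivity)
        · exact mul_le_mul_of_nonneg_left hqtE hM.le
        · exact mul_le_mul_of_nonneg_left hq1a (by positivity)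
    _ = (R₀ + X₀ + M/2) * (a * t * Real.exp (-(t * a / 2))) + M * 2 ^ lam * (1 + t) ^ (-lam) := by
        ring
    _ ≤ (R₀ + X₀ + M/2) * (2 ^ (1 + 2 * lam) * K * (1 + t) ^ (-lam))
        + M * 2 ^ lam * (1 + t) ^ (-lam) := by
        apply add_le_add_left
        exact mul_le_mul_of_nonneg_left hD (by positivity)
    _ = ((R₀ + X₀ + M / 2) * (2 ^ (1 + 2 * lam) * K) + M * 2 ^ lam) * (1 + t) ^ (-lam) := by
        ring
end

section
/- Let $\varepsilon \in (0,1)$, $M_0 > 0$, $a > 0$, $w_0 \in \mathbb{R}$, and let $f : [0,\infty) \to \mathbb{R}$ be measurable with $|f(\tau)| \le M_0$ for almost every $\tau$. Then for every $t > 0$, $a^{1-\varepsilon} \Big| e^{-ta} w_0 + \int_0^t e^{-(t-\tau) a} f(\tau)\, d\tau \Big| \le \big( (1-\varepsilon)/e \big)^{1-\varepsilon} \big( t^{\varepsilon - 1} |w_0| + M_0 \, \varepsilon^{-1} t^{\varepsilon} \big)$. -/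
open Real MeasureTheory intervalIntegral

/-- Scalar smoothing estimate: for `ε ∈ (0,1)`, `M₀ > 0`, `a > 0`, `w₀ ∈ ℝ`, and
measurable `f` with `|f τ| ≤ M₀` a.e., one has, for every `t > 0`,
`a^{1-ε} |e^{-t a} w₀ + ∫_0^t e^{-(t-τ) a} f τ dτ|
  ≤ ((1-ε)/e)^{1-ε} (t^{ε-1} |w₀| + M₀ ε⁻¹ t^ε)`. -/
theorem stmt9 (ε M₀ a : ℝ) (hε : ε ∈ Set.Ioo (0:ℝ) 1) (hM₀ : 0 < M₀) (ha : 0 < a)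
    (w₀ : ℝ) (f : ℝ → ℝ) (hf : Measurable f)
    (hfb : ∀ᵐ τ ∂(volume : Measure ℝ), 0 ≤ τ → |f τ| ≤ M₀) :
    ∀ t : ℝ, 0 < t →
      a ^ (1 - ε) *
          |Real.exp (-(t * a)) * w₀ + ∫ τ in (0:ℝ)..t, Real.exp (-((t - τ) * a)) * f τ|
        ≤ ((1 - ε) / Real.exp 1) ^ (1 - ε)
            * (t ^ (ε - 1) * |w₀| + M₀ * ε⁻¹ * t ^ ε) := by
  obtain ⟨hε0, hε1⟩ := hε
  intro t ht
  set C : ℝ := ((1 - ε) / Real.exp 1) ^ (1 - ε) with hCdef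
  have h1ε : (0:ℝ) < 1 - ε := by linarith
  have hC : 0 < C := Real.rpow_pos_of_pos (div_pos h1ε (Real.exp_pos 1)) _
  have haε : 0 < a ^ (1 - ε) := Real.rpow_pos_of_pos ha _
  -- Lemma A : x^{1-ε} e^{-x} ≤ C for x ≥ 0
  have lemA : ∀ x : ℝ, 0 ≤ x → x ^ (1 - ε) * Real.exp (-x) ≤ C := by
    intro x hx
    have h1 : x ≤ (1 - ε) / Real.exp 1 * Real.exp (x / (1 - ε)) := by
      have h2 := Real.add_one_le_exp (x / (1 - ε) - 1)
      have h3 : Real.exp (x / (1 - ε) - 1) = Real.exp (x / (1 - ε)) / Real.exp 1 := by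
        rw [Real.exp_sub]
      rw [h3] at h2
      have h4 : x / (1 - ε) ≤ Real.exp (x / (1 - ε)) / Real.exp 1 := by linarith
      calc x = (1 - ε) * (x / (1 - ε)) := by field_simp
        _ ≤ (1 - ε) * (Real.exp (x / (1 - ε)) / Real.exp 1) := by
            exact mul_le_mul_of_nonneg_left h4 h1ε.le
        _ = (1 - ε) / Real.exp 1 * Real.exp (x / (1 - ε)) := by ring
    have h5 : x ^ (1 - ε) ≤ ((1 - ε) / Real.exp 1 * Real.exp (x / (1 - ε))) ^ (1 - ε) :=
      Real.rpow_le_rpow hx h1 h1ε.le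
    have h6 : ((1 - ε) / Real.exp 1 * Real.exp (x / (1 - ε))) ^ (1 - ε)
        = C * Real.exp x := by
      rw [Real.mul_rpow (by positivity) (Real.exp_pos _).le, hCdef, ← Real.exp_mul]
      congr 1
      field_simp
    rw [h6] at h5
    calc x ^ (1 - ε) * Real.exp (-x) ≤ C * Real.exp x * Real.exp (-x) := by
          exact mul_le_mul_of_nonneg_right h5 (Real.exp_pos _).le
      _ = C := by rw [mul_assoc, ← Real.exp_add]; simp
  -- Key pointwise bound
  have key : ∀ s : ℝ, 0 < s → a ^ (1 - ε) * Real.exp (-(s * a)) ≤ C * s ^ (ε - 1) := by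
    intro s hs
    have hsε : 0 < s ^ (1 - ε) := Real.rpow_pos_of_pos hs _
    have h7 : s ^ (ε - 1) = (s ^ (1 - ε))⁻¹ := by
      rw [← Real.rpow_neg hs.le]; ring_nf
    rw [h7, ← div_eq_mul_inv, le_div_iff₀ hsε]
    calc a ^ (1 - ε) * Real.exp (-(s * a)) * s ^ (1 - ε)
        = (s * a) ^ (1 - ε) * Real.exp (-(s * a)) := by
          rw [Real.mul_rpow hs.le ha.le]; ring
      _ ≤ C := lemA (s * a) (by positivity)
  -- First term
  have hterm1 : a ^ (1 - ε) * |Real.exp (-(t * a)) * w₀| ≤ C * (t ^ (ε - 1) * |w₀|) := by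
    rw [abs_mul, abs_of_pos (Real.exp_pos _)]
    calc a ^ (1 - ε) * (Real.exp (-(t * a)) * |w₀|)
        = (a ^ (1 - ε) * Real.exp (-(t * a))) * |w₀| := by ring
      _ ≤ (C * t ^ (ε - 1)) * |w₀| := by
          exact mul_le_mul_of_nonneg_right (key t ht) (abs_nonneg _)
      _ = C * (t ^ (ε - 1) * |w₀|) := by ring
  -- Integral bound
  have hg_int : IntervalIntegrable (fun τ => M₀ * Real.exp (-((t - τ) * a))) volume 0 t :=
    (Continuous.intervalIntegrable (by fun_prop) 0 t)
  have hb : ∀ᵐ τ ∂(volume : Measure ℝ).restrict (Set.uIoc (0:ℝ) t),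
      ‖Real.exp (-((t - τ) * a)) * f τ‖ ≤ M₀ * Real.exp (-((t - τ) * a)) := by
    filter_upwards [ae_restrict_of_ae hfb, ae_restrict_mem measurableSet_uIoc] with τ h1 h2
    rw [Set.uIoc_of_le ht.le] at h2
    have hfτ : |f τ| ≤ M₀ := h1 h2.1.le
    rw [Real.norm_eq_abs, abs_mul, abs_of_pos (Real.exp_pos _)]
    calc Real.exp (-((t - τ) * a)) * |f τ| ≤ Real.exp (-((t - τ) * a)) * M₀ :=
          mul_le_mul_of_nonneg_left hfτ (Real.exp_pos _).le
      _ = M₀ * Real.exp (-((t - τ) * a)) := by ring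
  have habs : |∫ τ in (0:ℝ)..t, Real.exp (-((t - τ) * a)) * f τ|
      ≤ |∫ τ in (0:ℝ)..t, M₀ * Real.exp (-((t - τ) * a))| := by
    exact intervalIntegral.norm_integral_le_abs_of_norm_le hb hg_int
  have hint_eq : (∫ τ in (0:ℝ)..t, M₀ * Real.exp (-((t - τ) * a)))
      = M₀ * ∫ s in (0:ℝ)..t, Real.exp (-(s * a)) := by
    rw [intervalIntegral.integral_const_mul]
    congr 1
    have := intervalIntegral.integral_comp_sub_left (fun s => Real.exp (-(s * a))) t
      (a := 0) (b := t)
    simpa using this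
  
  have hintpos : 0 ≤ ∫ s in (0:ℝ)..t, Real.exp (-(s * a)) := by
    apply intervalIntegral.integral_nonneg ht.le
    intro s _; positivity
  have hint2 : a ^ (1 - ε) * ∫ s in (0:ℝ)..t, Real.exp (-(s * a))
      ≤ C * (ε⁻¹ * t ^ ε) := by
    have hI1 : IntervalIntegrable (fun s => a ^ (1 - ε) * Real.exp (-(s * a))) volume 0 t :=
      (Continuous.intervalIntegrable (by fun_prop) 0 t)
    have hI2 : IntervalIntegrable (fun s => C * s ^ (ε - 1)) volume 0 t :=
      (intervalIntegrable_rpow' (by linarith)).const_mul C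
    have hmono : (∫ s in (0:ℝ)..t, a ^ (1 - ε) * Real.exp (-(s * a)))
        ≤ ∫ s in (0:ℝ)..t, C * s ^ (ε - 1) := by
      apply intervalIntegral.integral_mono_ae_restrict ht.le hI1 hI2
      have h0 : ∀ᵐ s ∂(volume : Measure ℝ).restrict (Set.Icc (0:ℝ) t), s ≠ 0 := by
        refine ae_restrict_of_ae ?_
        exact ae_iff.mpr (by simpa using measure_singleton (0:ℝ))
      filter_upwards [h0, ae_restrict_mem measurableSet_Icc] with s hs0 hs
      exact key s (lt_of_le_of_ne hs.1 (Ne.symm hs0))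
    have hcalc : (∫ s in (0:ℝ)..t, C * s ^ (ε - 1)) = C * (ε⁻¹ * t ^ ε) := by
      rw [intervalIntegral.integral_const_mul, integral_rpow (Or.inl (by linarith))]
      rw [Real.zero_rpow (by linarith : ε - 1 + 1 ≠ 0)]
      have : ε - 1 + 1 = ε := by ring
      rw [this]
      field_simp
      ring
    rw [intervalIntegral.integral_const_mul] at hmono
    calc a ^ (1 - ε) * ∫ s in (0:ℝ)..t, Real.exp (-(s * a))
        = ∫ s in (0:ℝ)..t, a ^ (1 - ε) * Real.exp (-(s * a)) := by
          rw [intervalIntegral.integral_const_mul]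
      _ ≤ ∫ s in (0:ℝ)..t, C * s ^ (ε - 1) := by
          rw [intervalIntegral.integral_const_mul]; exact hmono
      _ = C * (ε⁻¹ * t ^ ε) := hcalc
  -- combine
  have hterm2 : a ^ (1 - ε) * |∫ τ in (0:ℝ)..t, Real.exp (-((t - τ) * a)) * f τ|
      ≤ C * (M₀ * ε⁻¹ * t ^ ε) := by
    calc a ^ (1 - ε) * |∫ τ in (0:ℝ)..t, Real.exp (-((t - τ) * a)) * f τ|
        ≤ a ^ (1 - ε) * |∫ τ in (0:ℝ)..t, M₀ * Real.exp (-((t - τ) * a))| :=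
          mul_le_mul_of_nonneg_left habs haε.le
      _ = a ^ (1 - ε) * (M₀ * ∫ s in (0:ℝ)..t, Real.exp (-(s * a))) := by
          rw [hint_eq, abs_of_nonneg (by positivity)]
      _ = M₀ * (a ^ (1 - ε) * ∫ s in (0:ℝ)..t, Real.exp (-(s * a))) := by ring
      _ ≤ M₀ * (C * (ε⁻¹ * t ^ ε)) := mul_le_mul_of_nonneg_left hint2 hM₀.le
      _ = C * (M₀ * ε⁻¹ * t ^ ε) := by ring
  calc a ^ (1 - ε) *
        |Real.exp (-(t * a)) * w₀ + ∫ τ in (0:ℝ)..t, Real.exp (-((t - τ) * a)) * f τ|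
      ≤ a ^ (1 - ε) * (|Real.exp (-(t * a)) * w₀|
          + |∫ τ in (0:ℝ)..t, Real.exp (-((t - τ) * a)) * f τ|) :=
        mul_le_mul_of_nonneg_left (abs_add_le _ _) haε.le
    _ = a ^ (1 - ε) * |Real.exp (-(t * a)) * w₀|
        + a ^ (1 - ε) * |∫ τ in (0:ℝ)..t, Real.exp (-((t - τ) * a)) * f τ| := by ring
    _ ≤ C * (t ^ (ε - 1) * |w₀|) + C * (M₀ * ε⁻¹ * t ^ ε) := add_le_add hterm1 hterm2
    _ = C * (t ^ (ε - 1) * |w₀| + M₀ * ε⁻¹ * t ^ ε) := by ring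
end

section
/- Let $\lambda > 0$, $a \ge 0$, $b \ge 0$, and let $T \in (0,\infty]$. Suppose $y : [0,T) \to [0,\infty)$ is absolutely continuous on compact subintervals, $y(0) \le a$, and $y'(t) + y(t) \le b (1+t)^{-2\lambda}$ for almost every $t \in (0,T)$. Then for all $t \in [0,T)$, $y(t) \le \big( a \, d_0(2\lambda, 1)\, e + b \, d_1(2\lambda, 1) \big) (1+t)^{-2\lambda}$, where $d_0(2\lambda,1) = (2\lambda/e)^{2\lambda}$ and $d_1(2\lambda,1) = 2^{2\lambda} \big[ ((2\lambda+1)/e)^{2\lambda+1} e + 1 \big]$. -/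
open Real MeasureTheory intervalIntegral

lemma aux_sup (ν x : ℝ) (hν : 0 ≤ ν) (hx : 0 ≤ x) :
    Real.exp (-x) * x ^ ν ≤ (ν / Real.exp 1) ^ ν := by
  rcases eq_or_lt_of_le hν with h | hν
  · simp [← h, Real.exp_le_one_iff.mpr (neg_nonpos.mpr hx)]
  rcases eq_or_lt_of_le hx with h | hx
  · rw [← h, Real.zero_rpow (ne_of_gt hν)]
    simpa using Real.rpow_nonneg (le_of_lt (div_pos hν (Real.exp_pos 1))) ν
  · have h1 : x ^ ν = Real.exp (ν * Real.log x) := by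
      rw [Real.rpow_def_of_pos hx, mul_comm]
    have h2 : (ν / Real.exp 1) ^ ν = Real.exp (ν * (Real.log ν - 1)) := by
      rw [Real.rpow_def_of_pos (div_pos hν (Real.exp_pos 1)), Real.log_div (ne_of_gt hν)
        (ne_of_gt (Real.exp_pos 1)), Real.log_exp, mul_comm]
    rw [h1, h2, ← Real.exp_add, Real.exp_le_exp]
    have h3 : Real.log (x / ν) ≤ x / ν - 1 := Real.log_le_sub_one_of_pos (div_pos hx hν)
    rw [Real.log_div (ne_of_gt hx) (ne_of_gt hν)] at h3
    nlinarith [mul_le_mul_of_nonneg_left h3 (le_of_lt hν),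
      mul_div_cancel₀ x (ne_of_gt hν)]

lemma aux_key (μ x : ℝ) (hμ : 0 < μ) (hx : (1:ℝ)/2 ≤ x) :
    Real.exp (1/2) * (Real.exp (-x) * x ^ μ) ≤ (μ + 1) ^ (μ + 1) * Real.exp (-μ) := by
  have hμ1 : (0:ℝ) < μ + 1 := by linarith
  have hRHS : (μ + 1) ^ (μ + 1) * Real.exp (-μ)
      = Real.exp ((μ + 1) * Real.log (μ + 1) - μ) := by
    rw [Real.rpow_def_of_pos hμ1, ← Real.exp_add]; ring_nf
  have lB : μ / (μ + 1) ≤ Real.log (μ + 1) := by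
    have := Real.one_sub_inv_le_log_of_pos hμ1
    have h1 : 1 - (μ+1)⁻¹ = μ / (μ+1) := by field_simp; ring
    linarith [h1 ▸ this]
  rcases le_or_gt (1/2 : ℝ) μ with hc | hc
  · -- μ ≥ 1/2
    have h1 : Real.exp (-x) * x ^ μ ≤ (μ / Real.exp 1) ^ μ :=
      aux_sup μ x (le_of_lt hμ) (by linarith)
    have h2 : (μ / Real.exp 1) ^ μ = Real.exp (μ * (Real.log μ - 1)) := by
      rw [Real.rpow_def_of_pos (div_pos hμ (Real.exp_pos 1)),
        Real.log_div (ne_of_gt hμ) (ne_of_gt (Real.exp_pos 1)), Real.log_exp, mul_comm]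
    have lA : Real.log μ + 1 / (μ + 1) ≤ Real.log (μ + 1) := by
      have hz : (0:ℝ) < (μ + 1) / μ := div_pos hμ1 hμ
      have := Real.one_sub_inv_le_log_of_pos hz
      rw [Real.log_div (ne_of_gt hμ1) (ne_of_gt hμ)] at this
      have h1 : 1 - ((μ+1)/μ)⁻¹ = 1/(μ+1) := by field_simp; ring
      linarith [h1 ▸ this]
    calc Real.exp (1/2) * (Real.exp (-x) * x ^ μ)
        ≤ Real.exp (1/2) * Real.exp (μ * (Real.log μ - 1)) := by
          rw [← h2]; exact mul_le_mul_of_nonneg_left h1 (le_of_lt (Real.exp_pos _))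
      _ = Real.exp (1/2 + μ * (Real.log μ - 1)) := (Real.exp_add _ _).symm
      _ ≤ Real.exp ((μ + 1) * Real.log (μ + 1) - μ) := by
          rw [Real.exp_le_exp]
          have e1 : μ * (Real.log μ + 1/(μ+1)) ≤ μ * Real.log (μ+1) :=
            mul_le_mul_of_nonneg_left lA (le_of_lt hμ)
          have e2 : (1:ℝ)/2 ≤ 2 * μ / (μ+1) := by
            rw [le_div_iff₀ hμ1]; linarith
          have e3 : μ / (μ+1) ≤ Real.log (μ+1) := lB
          have e1' := e1
          rw [mul_add, mul_one_div] at e1'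
          have expand : (μ + 1) * Real.log (μ+1)
              = μ * Real.log (μ+1) + Real.log (μ+1) := by ring
          have e2' : 2 * μ / (μ+1) = μ/(μ+1) + μ/(μ+1) := by ring
          linarith
      _ = (μ + 1) ^ (μ + 1) * Real.exp (-μ) := hRHS.symm
  · -- μ < 1/2
    have hx0 : (0:ℝ) < x := by linarith
    have hsplit : x ^ μ = x ^ ((1:ℝ)/2) * x ^ (μ - 1/2) := by
      rw [← Real.rpow_add hx0]; ring_nf
    have h1 : Real.exp (-x) * x ^ ((1:ℝ)/2) ≤ ((1/2 : ℝ) / Real.exp 1) ^ ((1:ℝ)/2) :=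
      aux_sup (1/2) x (by norm_num) (le_of_lt hx0)
    have h2 : x ^ (μ - 1/2) ≤ ((1:ℝ)/2) ^ (μ - 1/2) :=
      Real.rpow_le_rpow_of_nonpos (by norm_num) hx (by linarith)
    have hL : Real.exp (1/2) * (Real.exp (-x) * x ^ μ)
        ≤ Real.exp (1/2) * (((1/2 : ℝ) / Real.exp 1) ^ ((1:ℝ)/2) * ((1:ℝ)/2) ^ (μ - 1/2)) := by
      have hx2 : (0:ℝ) ≤ x ^ (μ - 1/2) := Real.rpow_nonneg (le_of_lt hx0) _
      have hx3 : (0:ℝ) ≤ Real.exp (-x) * x ^ ((1:ℝ)/2) := by positivity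
      rw [hsplit]
      have : Real.exp (-x) * (x ^ ((1:ℝ)/2) * x ^ (μ - 1/2))
          = (Real.exp (-x) * x ^ ((1:ℝ)/2)) * x ^ (μ - 1/2) := by ring
      rw [this]
      exact mul_le_mul_of_nonneg_left
        (mul_le_mul h1 h2 hx2 (Real.rpow_nonneg (by positivity) _))
        (le_of_lt (Real.exp_pos _))
    have hexp : Real.exp (1/2) * (((1/2 : ℝ) / Real.exp 1) ^ ((1:ℝ)/2) * ((1:ℝ)/2) ^ (μ - 1/2))
        = Real.exp (μ * Real.log (1/2)) := by
      rw [Real.rpow_def_of_pos (by positivity : (0:ℝ) < (1/2 : ℝ) / Real.exp 1),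
        Real.rpow_def_of_pos (by norm_num : (0:ℝ) < (1/2:ℝ)),
        Real.log_div (by norm_num) (ne_of_gt (Real.exp_pos 1)), Real.log_exp,
        ← Real.exp_add, ← Real.exp_add]
      ring_nf
    have hfin : Real.exp (μ * Real.log (1/2)) ≤ Real.exp ((μ + 1) * Real.log (μ + 1) - μ) := by
      rw [Real.exp_le_exp]
      have hlog2 : Real.log (1/2) = - Real.log 2 := by
        rw [one_div, Real.log_inv]
      have h2pos : (0:ℝ) ≤ Real.log 2 := Real.log_nonneg (by norm_num)
      have : μ ≤ (μ + 1) * Real.log (μ + 1) := by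
        have := mul_le_mul_of_nonneg_left lB (le_of_lt hμ1)
        have hq : (μ+1) * (μ/(μ+1)) = μ := by field_simp
        linarith [hq ▸ this]
      nlinarith
    rw [hRHS]
    calc Real.exp (1/2) * (Real.exp (-x) * x ^ μ) ≤ _ := hL
      _ = Real.exp (μ * Real.log (1/2)) := hexp
      _ ≤ _ := hfin

lemma ineq1 (μ t : ℝ) (hμ : 0 < μ) (ht : 0 ≤ t) :
    Real.exp (-t) ≤ (μ / Real.exp 1) ^ μ * Real.exp 1 * (1 + t) ^ (-μ) := by
  have h1t : (0:ℝ) < 1 + t := by linarith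
  have hP : (0:ℝ) < (1 + t) ^ μ := Real.rpow_pos_of_pos h1t μ
  rw [Real.rpow_neg (le_of_lt h1t), ← div_eq_mul_inv, le_div_iff₀ hP]
  have h2 : Real.exp (-t) = Real.exp 1 * Real.exp (-(1+t)) := by
    rw [← Real.exp_add]; ring_nf
  rw [h2]
  calc Real.exp 1 * Real.exp (-(1+t)) * (1+t) ^ μ
      = Real.exp 1 * (Real.exp (-(1+t)) * (1+t) ^ μ) := by ring
    _ ≤ Real.exp 1 * ((μ / Real.exp 1) ^ μ) :=
        mul_le_mul_of_nonneg_left (aux_sup μ (1+t) (le_of_lt hμ) (le_of_lt h1t))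
          (le_of_lt (Real.exp_pos 1))
    _ = (μ / Real.exp 1) ^ μ * Real.exp 1 := by ring

lemma ineq2 (μ t : ℝ) (hμ : 0 < μ) (ht : 0 ≤ t) :
    Real.exp (-(t/2)) ≤ (2:ℝ) ^ μ * (((μ+1) / Real.exp 1) ^ (μ+1) * Real.exp 1) * (1 + t) ^ (-μ) := by
  have h1t : (0:ℝ) < 1 + t := by linarith
  have hμ1 : (0:ℝ) < μ + 1 := by linarith
  have hC : ((μ+1) / Real.exp 1) ^ (μ+1) * Real.exp 1 = (μ+1) ^ (μ+1) * Real.exp (-μ) := by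
    rw [Real.rpow_def_of_pos (div_pos hμ1 (Real.exp_pos 1)),
      Real.rpow_def_of_pos hμ1,
      Real.log_div (ne_of_gt hμ1) (ne_of_gt (Real.exp_pos 1)), Real.log_exp,
      ← Real.exp_add, ← Real.exp_add]
    ring_nf
  rw [hC]
  have hP : (0:ℝ) < (1 + t) ^ μ := Real.rpow_pos_of_pos h1t μ
  rw [Real.rpow_neg (le_of_lt h1t), ← div_eq_mul_inv, le_div_iff₀ hP]
  set x : ℝ := (1 + t) / 2 with hxdef
  have hx : (1:ℝ)/2 ≤ x := by rw [hxdef]; linarith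
  have hsplit : (1 + t) ^ μ = (2:ℝ) ^ μ * x ^ μ := by
    rw [← Real.mul_rpow (by norm_num) (by positivity)]
    congr 1; rw [hxdef]; ring
  have hexp : Real.exp (-(t/2)) = Real.exp (1/2) * Real.exp (-x) := by
    rw [← Real.exp_add, hxdef]; ring_nf
  rw [hsplit, hexp]
  calc Real.exp (1/2) * Real.exp (-x) * ((2:ℝ) ^ μ * x ^ μ)
      = (2:ℝ) ^ μ * (Real.exp (1/2) * (Real.exp (-x) * x ^ μ)) := by ring
    _ ≤ (2:ℝ) ^ μ * ((μ+1) ^ (μ+1) * Real.exp (-μ)) :=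
        mul_le_mul_of_nonneg_left (aux_key μ x hμ hx)
          (le_of_lt (Real.rpow_pos_of_pos (by norm_num) μ))

lemma twopow (μ t : ℝ) (hμ : 0 < μ) (ht : 0 ≤ t) :
    (1 + t/2) ^ (-μ) ≤ (2:ℝ) ^ μ * (1 + t) ^ (-μ) := by
  have h1 : (0:ℝ) < (1+t)/2 := by linarith
  have h2 : (1+t)/2 ≤ 1 + t/2 := by linarith
  calc (1 + t/2) ^ (-μ) ≤ ((1+t)/2) ^ (-μ) :=
        Real.rpow_le_rpow_of_nonpos h1 h2 (by linarith)
    _ = (1+t) ^ (-μ) / (2:ℝ) ^ (-μ) := Real.div_rpow (by linarith) (by norm_num) _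
    _ = (2:ℝ) ^ μ * (1 + t) ^ (-μ) := by
        rw [Real.rpow_neg (by norm_num : (0:ℝ) ≤ 2), div_eq_mul_inv, inv_inv]; ring

/-- Quantitative Gronwall step. Let `λ > 0`, `a ≥ 0`, `b ≥ 0`, `T ∈ (0,∞]`. Suppose
`y : [0,T) → [0,∞)` is absolutely continuous on compact subintervals (encoded by a locally
integrable a.e.-derivative `g` with `y t = y s + ∫_s^t g`), `y 0 ≤ a`, and
`g t + y t ≤ b (1+t)^{-2λ}` for a.e. `t ∈ (0,T)`. Then for all `t ∈ [0,T)`,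
`y t ≤ (a d₀(2λ,1) e + b d₁(2λ,1)) (1+t)^{-2λ}`, where `d₀(2λ,1) = (2λ/e)^{2λ}` and
`d₁(2λ,1) = 2^{2λ} [((2λ+1)/e)^{2λ+1} e + 1]`. -/
theorem stmt10 (lam a b : ℝ) (hlam : 0 < lam) (ha : 0 ≤ a) (hb : 0 ≤ b)
    (T : ENNReal) (hT : 0 < T) (y g : ℝ → ℝ)
    (hy_nonneg : ∀ t : ℝ, 0 ≤ t → ENNReal.ofReal t < T → 0 ≤ y t)
    (hAC : ∀ s t : ℝ, 0 ≤ s → s ≤ t → ENNReal.ofReal t < T →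
      IntervalIntegrable g volume s t ∧ y t = y s + ∫ τ in s..t, g τ)
    (hy0 : y 0 ≤ a)
    (hdiff : ∀ᵐ t ∂(volume : Measure ℝ), 0 < t → ENNReal.ofReal t < T →
      g t + y t ≤ b * (1 + t) ^ (-(2 * lam))) :
    ∀ t : ℝ, 0 ≤ t → ENNReal.ofReal t < T →
      y t ≤ (a * ((2 * lam / Real.exp 1) ^ (2 * lam) * Real.exp 1)
              + b * ((2:ℝ) ^ (2 * lam)
                  * (((2 * lam + 1) / Real.exp 1) ^ (2 * lam + 1) * Real.exp 1 + 1)))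
            * (1 + t) ^ (-(2 * lam)) := by
  intro t ht htT
  set μ : ℝ := 2 * lam with hμdef
  have hμ : 0 < μ := by positivity
  have hoT : ∀ s : ℝ, s ≤ t → ENNReal.ofReal s < T :=
    fun s hs => lt_of_le_of_lt (ENNReal.ofReal_le_ofReal hs) htT
  -- continuity of y on Icc 0 t
  have hg_int : IntervalIntegrable g volume 0 t := (hAC 0 t le_rfl ht htT).1
  have hy_cont : ContinuousOn y (Set.Icc 0 t) := by
    have h := intervalIntegral.continuousOn_primitive_interval' hg_int Set.left_mem_uIcc
    rw [Set.uIcc_of_le ht] at h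
    exact (continuousOn_const.add h).congr
      (fun s hs => (hAC 0 s le_rfl hs.1 (hoT s hs.2)).2)
  -- the integrand f₀ of the Duhamel term
  set f₀ : ℝ → ℝ := fun τ => Real.exp τ * (1 + τ) ^ (-μ) with hf₀def
  have hf₀ca : ∀ s : ℝ, s ∈ Set.Ioi (-1:ℝ) → ContinuousAt f₀ s := by
    intro s hs
    apply Real.continuous_exp.continuousAt.mul
    have h1 : ContinuousAt (fun u : ℝ => u ^ (-μ)) (1 + s) :=
      Real.continuousAt_rpow_const _ _ (Or.inl (by simp only [Set.mem_Ioi] at hs; exact ne_of_gt (by linarith)))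
    exact h1.comp ((continuous_const.add continuous_id).continuousAt)
  have hB₀ca : ∀ s : ℝ, 0 ≤ s → ContinuousAt (fun τ : ℝ => b * (1 + τ) ^ (-μ)) s := by
    intro s hs
    apply continuousAt_const.mul
    exact (Real.continuousAt_rpow_const _ _ (Or.inl (ne_of_gt (by linarith)))).comp
      ((continuous_const.add continuous_id).continuousAt)
  have hf₀int : ∀ u v : ℝ, 0 ≤ u → IntervalIntegrable f₀ volume u v → True := fun _ _ _ _ => trivial
  have hf₀int' : ∀ u v : ℝ, 0 ≤ u → u ≤ v → IntervalIntegrable f₀ volume u v := by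
    intro u v hu huv
    apply ContinuousOn.intervalIntegrable
    rw [Set.uIcc_of_le huv]
    exact fun x hx => (hf₀ca x (by simp only [Set.mem_Ioi]; linarith [hx.1])).continuousWithinAt
  -- the comparison function W
  set I : ℝ → ℝ := fun s => ∫ τ in (0:ℝ)..s, f₀ τ with hIdef
  set W : ℝ → ℝ := fun s => Real.exp (-s) * (y 0 + b * I s) with hWdef
  have hW' : ∀ s : ℝ, 0 ≤ s → HasDerivAt W (b * (1 + s) ^ (-μ) - W s) s := by
    intro s hs
    have hsmem : s ∈ Set.Ioi (-1:ℝ) := by simp only [Set.mem_Ioi]; linarith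
    have hI' : HasDerivAt I (f₀ s) s :=
      intervalIntegral.integral_hasDerivAt_right (hf₀int' 0 s le_rfl hs)
        (ContinuousAt.stronglyMeasurableAtFilter isOpen_Ioi hf₀ca s hsmem)
        (hf₀ca s hsmem)
    have h1 : HasDerivAt (fun u : ℝ => Real.exp (-u)) (Real.exp (-s) * (-1)) s :=
      (hasDerivAt_neg s).exp
    have h2 : HasDerivAt (fun u => y 0 + b * I u) (b * f₀ s) s := by
      simpa using hI'.const_mul b
    have h3 := h1.mul h2
    refine h3.congr_deriv ?_
    have hee : Real.exp (-s) * Real.exp s = 1 := by rw [← Real.exp_add]; simp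
    simp only [hWdef, hf₀def]
    linear_combination (b * (1 + s) ^ (-μ)) * hee
  have hWcont : ∀ u v : ℝ, 0 ≤ u → ContinuousOn W (Set.Icc u v) :=
    fun u v hu x hx => ((hW' x (le_trans hu hx.1)).continuousAt).continuousWithinAt
  have hWeq : ∀ s t' : ℝ, 0 ≤ s → s ≤ t' →
      W t' - W s = ∫ τ in s..t', (b * (1 + τ) ^ (-μ) - W τ) := by
    intro s t' hs hst
    have hder : ∀ x ∈ Set.uIcc s t', HasDerivAt W (b * (1 + x) ^ (-μ) - W x) x := by
      rw [Set.uIcc_of_le hst]; exact fun x hx => hW' x (le_trans hs hx.1)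
    have hint : IntervalIntegrable (fun τ => b * (1 + τ) ^ (-μ) - W τ) volume s t' := by
      apply ContinuousOn.intervalIntegrable
      rw [Set.uIcc_of_le hst]
      exact ContinuousOn.sub
        (fun x hx => (hB₀ca x (le_trans hs hx.1)).continuousWithinAt)
        (hWcont s t' hs)
    exact (intervalIntegral.integral_eq_sub_of_hasDerivAt hder hint).symm
  -- the differential inequality in integral form
  have hBy_int : ∀ s t' : ℝ, 0 ≤ s → s ≤ t' → t' ≤ t →
      IntervalIntegrable (fun τ => b * (1 + τ) ^ (-μ) - y τ) volume s t' := by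
    intro s t' hs hst ht'
    apply ContinuousOn.intervalIntegrable
    rw [Set.uIcc_of_le hst]
    exact ContinuousOn.sub
      (fun x hx => (hB₀ca x (le_trans hs hx.1)).continuousWithinAt)
      (hy_cont.mono (Set.Icc_subset_Icc hs ht'))
  have hyineq : ∀ s t' : ℝ, 0 ≤ s → s ≤ t' → t' ≤ t →
      y t' - y s ≤ ∫ τ in s..t', (b * (1 + τ) ^ (-μ) - y τ) := by
    intro s t' hs hst ht'
    obtain ⟨hgi, hy⟩ := hAC s t' hs hst (hoT t' ht')
    rw [hy, add_sub_cancel_left]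
    apply intervalIntegral.integral_mono_ae_restrict hst hgi (hBy_int s t' hs hst ht')
    have h0 : ∀ᵐ τ ∂(volume.restrict (Set.Icc s t')), τ ∈ Set.Icc s t' :=
      ae_restrict_mem measurableSet_Icc
    have h1 : ∀ᵐ τ ∂(volume.restrict (Set.Icc s t')), τ ≠ 0 := by
      apply ae_restrict_of_ae
      have hset : {τ : ℝ | ¬ τ ≠ 0} = {0} := by ext τ; simp
      rw [ae_iff, hset]; exact measure_singleton 0
    have h2 : ∀ᵐ τ ∂(volume.restrict (Set.Icc s t')),
        (0 < τ → ENNReal.ofReal τ < T → g τ + y τ ≤ b * (1 + τ) ^ (-μ)) :=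
      ae_restrict_of_ae hdiff
    filter_upwards [h0, h1, h2] with τ hmem hne himp
    have hτ0 : 0 < τ := lt_of_le_of_ne (le_trans hs hmem.1) (Ne.symm hne)
    have := himp hτ0 (hoT τ (le_trans hmem.2 ht'))
    linarith
  -- W 0 = y 0
  have hW0 : W 0 = y 0 := by simp [hWdef, hIdef]
  -- the comparison: y ≤ W on [0, t]
  have hm : ∀ s ∈ Set.Icc (0:ℝ) t, y s ≤ W s := by
    by_contra hcon
    push_neg at hcon
    obtain ⟨t₂, ht₂mem, ht₂⟩ := hcon
    set S : Set ℝ := {s : ℝ | s ∈ Set.Icc 0 t₂ ∧ y s - W s ≤ 0} with hSdef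
    have hmc : ContinuousOn (fun s => y s - W s) (Set.Icc 0 t₂) :=
      (hy_cont.mono (Set.Icc_subset_Icc le_rfl ht₂mem.2)).sub (hWcont 0 t₂ le_rfl)
    have hSclosed : IsClosed S := by
      have h := hmc.preimage_isClosed_of_isClosed isClosed_Icc (isClosed_Iic (a := (0:ℝ)))
      have hEq : S = Set.Icc 0 t₂ ∩ (fun s => y s - W s) ⁻¹' Set.Iic 0 := by
        ext u; simp [hSdef, Set.mem_Icc, Set.mem_Iic, and_assoc]
      rw [hEq]; exact h
    have h0S : (0:ℝ) ∈ S := ⟨⟨le_rfl, ht₂mem.1⟩, by rw [hW0]; simp⟩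
    have hbdd : BddAbove S := ⟨t₂, fun x hx => hx.1.2⟩
    set t₁ : ℝ := sSup S with ht₁def
    have ht₁S : t₁ ∈ S := hSclosed.csSup_mem ⟨0, h0S⟩ hbdd
    have ht₁0 : 0 ≤ t₁ := ht₁S.1.1
    have ht₁le : t₁ ≤ t₂ := ht₁S.1.2
    have ht₁lt : t₁ < t₂ := by
      rcases eq_or_lt_of_le ht₁le with h | h
      · exfalso; rw [h] at ht₁S; linarith [ht₁S.2]
      · exact h
    have hpos : ∀ u : ℝ, t₁ < u → u ≤ t₂ → 0 < y u - W u := by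
      intro u hu1 hu2
      by_contra h
      push_neg at h
      have huS : u ∈ S := ⟨⟨by linarith, hu2⟩, h⟩
      have := le_csSup hbdd huS
      linarith
    have ht₂t : t₂ ≤ t := ht₂mem.2
    have hIneq := hyineq t₁ t₂ ht₁0 (le_of_lt ht₁lt) ht₂t
    have hWe := hWeq t₁ t₂ ht₁0 (le_of_lt ht₁lt)
    have hint_y := hBy_int t₁ t₂ ht₁0 (le_of_lt ht₁lt) ht₂t
    have hint_W : IntervalIntegrable (fun τ => b * (1 + τ) ^ (-μ) - W τ) volume t₁ t₂ := by
      apply ContinuousOn.intervalIntegrable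
      rw [Set.uIcc_of_le (le_of_lt ht₁lt)]
      exact ContinuousOn.sub
        (fun x hx => (hB₀ca x (le_trans ht₁0 hx.1)).continuousWithinAt)
        (hWcont t₁ t₂ ht₁0)
    have hsub : (∫ τ in t₁..t₂, (b * (1 + τ) ^ (-μ) - y τ))
        - (∫ τ in t₁..t₂, (b * (1 + τ) ^ (-μ) - W τ))
        = - ∫ τ in t₁..t₂, (y τ - W τ) := by
      rw [← intervalIntegral.integral_sub hint_y hint_W, ← intervalIntegral.integral_neg]
      exact intervalIntegral.integral_congr (fun τ _ => by ring)
    have hnn : 0 ≤ ∫ τ in t₁..t₂, (y τ - W τ) := by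
      apply intervalIntegral.integral_nonneg_of_ae_restrict (le_of_lt ht₁lt)
      have h0 : ∀ᵐ τ ∂(volume.restrict (Set.Icc t₁ t₂)), τ ∈ Set.Icc t₁ t₂ :=
        ae_restrict_mem measurableSet_Icc
      have h1 : ∀ᵐ τ ∂(volume.restrict (Set.Icc t₁ t₂)), τ ≠ t₁ := by
        apply ae_restrict_of_ae
        have hset : {τ : ℝ | ¬ τ ≠ t₁} = {t₁} := by ext τ; simp
        rw [ae_iff, hset]; exact measure_singleton t₁
      filter_upwards [h0, h1] with τ hmem hne
      exact le_of_lt (hpos τ (lt_of_le_of_ne hmem.1 (Ne.symm hne)) hmem.2)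
    have hfin : y t₂ - W t₂ ≤ y t₁ - W t₁ - ∫ τ in t₁..t₂, (y τ - W τ) := by
      have := hIneq
      linarith [hsub, hWe]
    have := ht₁S.2
    linarith
  -- now the quantitative estimates
  have hyW : y t ≤ W t := hm t ⟨ht, le_rfl⟩
  have ht2 : 0 ≤ t / 2 := by linarith
  have hI1int : IntervalIntegrable f₀ volume 0 (t/2) := hf₀int' 0 (t/2) le_rfl ht2
  have hI2int : IntervalIntegrable f₀ volume (t/2) t := hf₀int' (t/2) t ht2 (by linarith)
  have hIsplit : I t = (∫ τ in (0:ℝ)..(t/2), f₀ τ) + ∫ τ in (t/2)..t, f₀ τ :=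
    (intervalIntegral.integral_add_adjacent_intervals hI1int hI2int).symm
  have hI1 : (∫ τ in (0:ℝ)..(t/2), f₀ τ) ≤ Real.exp (t/2) := by
    have hmono : (∫ τ in (0:ℝ)..(t/2), f₀ τ) ≤ ∫ τ in (0:ℝ)..(t/2), Real.exp τ := by
      apply intervalIntegral.integral_mono_on ht2 hI1int
        (Real.continuous_exp.intervalIntegrable 0 (t/2))
      intro x hx
      simp only [hf₀def]
      have h1 : (1 + x) ^ (-μ) ≤ 1 :=
        Real.rpow_le_one_of_one_le_of_nonpos (by linarith [hx.1]) (by linarith)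
      nlinarith [Real.exp_pos x]
    rw [integral_exp] at hmono
    have := Real.exp_pos (0:ℝ)
    simp only [Real.exp_zero] at hmono
    linarith
  have hI2 : (∫ τ in (t/2)..t, f₀ τ) ≤ (1 + t/2) ^ (-μ) * Real.exp t := by
    have hmono : (∫ τ in (t/2)..t, f₀ τ) ≤ ∫ τ in (t/2)..t, (1 + t/2) ^ (-μ) * Real.exp τ := by
      apply intervalIntegral.integral_mono_on (by linarith) hI2int
      · exact (continuous_const.mul Real.continuous_exp).intervalIntegrable _ _
      · intro x hx
        simp only [hf₀def]
        have h1 : (1 + x) ^ (-μ) ≤ (1 + t/2) ^ (-μ) :=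
          Real.rpow_le_rpow_of_nonpos (by linarith) (by linarith [hx.1]) (by linarith)
        nlinarith [Real.exp_pos x]
    rw [intervalIntegral.integral_const_mul, integral_exp] at hmono
    have h2 : (0:ℝ) ≤ (1 + t/2) ^ (-μ) := Real.rpow_nonneg (by linarith) _
    nlinarith [Real.exp_pos (t/2)]
  -- assemble
  have hexp_pos : (0:ℝ) < Real.exp (-t) := Real.exp_pos _
  have hWt : W t = Real.exp (-t) * y 0 + b * (Real.exp (-t) * I t) := by
    simp only [hWdef]; ring
  have hP : (0:ℝ) ≤ (1 + t) ^ (-μ) := Real.rpow_nonneg (by linarith) _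
  have e1 : Real.exp (-t) * y 0 ≤ a * ((μ / Real.exp 1) ^ μ * Real.exp 1) * (1 + t) ^ (-μ) := by
    have h1 : Real.exp (-t) * y 0 ≤ Real.exp (-t) * a :=
      mul_le_mul_of_nonneg_left hy0 (le_of_lt hexp_pos)
    have h2 : Real.exp (-t) * a ≤ ((μ / Real.exp 1) ^ μ * Real.exp 1 * (1 + t) ^ (-μ)) * a :=
      mul_le_mul_of_nonneg_right (ineq1 μ t hμ ht) ha
    calc Real.exp (-t) * y 0 ≤ Real.exp (-t) * a := h1
      _ ≤ ((μ / Real.exp 1) ^ μ * Real.exp 1 * (1 + t) ^ (-μ)) * a := h2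
      _ = a * ((μ / Real.exp 1) ^ μ * Real.exp 1) * (1 + t) ^ (-μ) := by ring
  have e2 : Real.exp (-t) * I t ≤ ((2:ℝ) ^ μ * (((μ+1) / Real.exp 1) ^ (μ+1) * Real.exp 1)
      + (2:ℝ) ^ μ) * (1 + t) ^ (-μ) := by
    rw [hIsplit, mul_add]
    have p1 : Real.exp (-t) * (∫ τ in (0:ℝ)..(t/2), f₀ τ)
        ≤ (2:ℝ) ^ μ * (((μ+1) / Real.exp 1) ^ (μ+1) * Real.exp 1) * (1 + t) ^ (-μ) := by
      have h1 : Real.exp (-t) * (∫ τ in (0:ℝ)..(t/2), f₀ τ) ≤ Real.exp (-t) * Real.exp (t/2) :=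
        mul_le_mul_of_nonneg_left hI1 (le_of_lt hexp_pos)
      have h2 : Real.exp (-t) * Real.exp (t/2) = Real.exp (-(t/2)) := by
        rw [← Real.exp_add]; ring_nf
      calc Real.exp (-t) * (∫ τ in (0:ℝ)..(t/2), f₀ τ) ≤ Real.exp (-(t/2)) := by rw [← h2]; exact h1
        _ ≤ _ := ineq2 μ t hμ ht
    have p2 : Real.exp (-t) * (∫ τ in (t/2)..t, f₀ τ) ≤ (2:ℝ) ^ μ * (1 + t) ^ (-μ) := by
      have h1 : Real.exp (-t) * (∫ τ in (t/2)..t, f₀ τ)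
          ≤ Real.exp (-t) * ((1 + t/2) ^ (-μ) * Real.exp t) :=
        mul_le_mul_of_nonneg_left hI2 (le_of_lt hexp_pos)
      have h2 : Real.exp (-t) * ((1 + t/2) ^ (-μ) * Real.exp t) = (1 + t/2) ^ (-μ) := by
        rw [show Real.exp (-t) * ((1 + t/2) ^ (-μ) * Real.exp t)
          = (1 + t/2) ^ (-μ) * (Real.exp (-t) * Real.exp t) by ring, ← Real.exp_add]
        simp
      calc Real.exp (-t) * (∫ τ in (t/2)..t, f₀ τ) ≤ (1 + t/2) ^ (-μ) := by rw [← h2]; exact h1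
        _ ≤ _ := twopow μ t hμ ht
    linarith
  have e2' : b * (Real.exp (-t) * I t) ≤ b * (((2:ℝ) ^ μ * (((μ+1) / Real.exp 1) ^ (μ+1) * Real.exp 1)
      + (2:ℝ) ^ μ) * (1 + t) ^ (-μ)) := mul_le_mul_of_nonneg_left e2 hb
  calc y t ≤ W t := hyW
    _ = Real.exp (-t) * y 0 + b * (Real.exp (-t) * I t) := hWt
    _ ≤ a * ((μ / Real.exp 1) ^ μ * Real.exp 1) * (1 + t) ^ (-μ)
        + b * (((2:ℝ) ^ μ * (((μ+1) / Real.exp 1) ^ (μ+1) * Real.exp 1) + (2:ℝ) ^ μ) * (1 + t) ^ (-μ)) := by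
        linarith
    _ = (a * ((μ / Real.exp 1) ^ μ * Real.exp 1)
          + b * ((2:ℝ) ^ μ * (((μ + 1) / Real.exp 1) ^ (μ + 1) * Real.exp 1 + 1)))
        * (1 + t) ^ (-μ) := by ring
end

section
/- Let $\mu > 0$, $M \ge 0$ and $y_0 \ge 0$. Suppose $y : [0,\infty) \to [0,\infty)$ and $g : [0,\infty) \to [0,\infty)$ are measurable, $g(\tau) \le M^2 (1+\tau)^{-2\mu}$ for almost every $\tau \ge 0$, and $y(t) \le e^{-t} y_0 + \int_0^t e^{-(t-\tau)} g(\tau) \, d\tau$ for all $t \ge 0$. Then $y(t) \le \big( y_0 \, d_0(2\mu,1)\, e + M^2 \, d_1(2\mu, 1) \big) (1+t)^{-2\mu}$ for all $t \ge 0$, where $d_0(2\mu,1) = (2\mu/e)^{2\mu}$ and $d_1(2\mu,1) = 2^{2\mu} \big[ ((2\mu+1)/e)^{2\mu+1} e + 1 \big]$. -/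
open Real MeasureTheory intervalIntegral

lemma key_exp' (β x : ℝ) (hβ : 0 < β) (hx : 0 < x) :
    Real.exp (-x) * x ^ β ≤ (β / Real.exp 1) ^ β := by
  have h1 : x ^ β = Real.exp (β * Real.log x) := by
    rw [Real.rpow_def_of_pos hx, mul_comm]
  have h2 : (β / Real.exp 1) ^ β = Real.exp (β * (Real.log β - 1)) := by
    rw [Real.rpow_def_of_pos (by positivity), Real.log_div (ne_of_gt hβ) (Real.exp_ne_zero 1),
      Real.log_exp, mul_comm]
  rw [h1, h2, ← Real.exp_add]
  apply Real.exp_le_exp.2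
  have h3 := Real.log_le_sub_one_of_pos (show 0 < x / β by positivity)
  have hlog : Real.log (x / β) = Real.log x - Real.log β :=
    Real.log_div (ne_of_gt hx) (ne_of_gt hβ)
  rw [hlog] at h3
  have h4 : β * (Real.log x - Real.log β) ≤ β * (x / β - 1) :=
    mul_le_mul_of_nonneg_left h3 hβ.le
  have h5 : β * (x / β - 1) = x - β := by field_simp
  nlinarith

-- Main integral bound
lemma phi_bound (μ t : ℝ) (hμ : 0 < μ) (ht : 0 ≤ t) :
    (∫ τ in (0:ℝ)..t, Real.exp (-(t - τ)) * (1 + τ) ^ (-(2*μ))) ≤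
      ((2:ℝ) ^ (2*μ) * (((2*μ + 1) / Real.exp 1) ^ (2*μ + 1) * Real.exp 1 + 1))
        * (1 + t) ^ (-(2*μ)) := by
  set α := 2 * μ with hαdef
  have hα : 0 < α := by positivity
  have h1t : (0:ℝ) < 1 + t := by linarith
  set φ : ℝ → ℝ := fun τ => Real.exp (-(t - τ)) * (1 + τ) ^ (-α) with hφdef
  -- continuity / integrability
  have hcont : ContinuousOn φ (Set.Ici (0:ℝ)) := by
    apply ContinuousOn.mul
    · exact (Real.continuous_exp.comp (by continuity)).continuousOn
    · exact (continuousOn_const.add continuousOn_id).rpow_const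
        (fun x hx => Or.inl (by simp only [Set.mem_Ici] at hx; show (1:ℝ) + x ≠ 0; exact (by linarith : (0:ℝ) < 1 + x).ne'))
  have hii : ∀ a b : ℝ, 0 ≤ a → 0 ≤ b → IntervalIntegrable φ volume a b := by
    intro a b ha hb
    apply (hcont.mono _).intervalIntegrable
    intro x hx
    rcases Set.mem_uIcc.1 hx with ⟨h1, _⟩ | ⟨h1, _⟩ <;> simp only [Set.mem_Ici] <;> linarith
  have hsplit : (∫ τ in (0:ℝ)..t, φ τ)
      = (∫ τ in (0:ℝ)..(t/2), φ τ) + ∫ τ in (t/2)..t, φ τ :=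
    (intervalIntegral.integral_add_adjacent_intervals
      (hii 0 (t/2) le_rfl (by linarith)) (hii (t/2) t (by linarith) ht)).symm
  -- head bound
  have hhead : (∫ τ in (0:ℝ)..(t/2), φ τ) ≤ (t/2) * Real.exp (-(t/2)) := by
    have h := intervalIntegral.integral_mono_on (by linarith : (0:ℝ) ≤ t/2)
      (hii 0 (t/2) le_rfl (by linarith)) (_root_.intervalIntegrable_const (c := Real.exp (-(t/2))))
      (fun x hx => by
        obtain ⟨hx0, hx1⟩ := hx
        have e1 : Real.exp (-(t - x)) ≤ Real.exp (-(t/2)) :=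
          Real.exp_le_exp.2 (by linarith)
        have e2 : (1 + x) ^ (-α) ≤ 1 :=
          Real.rpow_le_one_of_one_le_of_nonpos (by linarith) (by linarith)
        calc φ x ≤ Real.exp (-(t/2)) * 1 :=
              mul_le_mul e1 e2 (Real.rpow_nonneg (by linarith) _) (Real.exp_pos _).le
          _ = Real.exp (-(t/2)) := mul_one _)
    rw [intervalIntegral.integral_const] at h
    simpa [smul_eq_mul] using h
  -- analytic bound for head constant
  have hheadc : (t/2) * Real.exp (-(t/2)) ≤
      (2:ℝ) ^ α * (((α + 1) / Real.exp 1) ^ (α + 1) * Real.exp 1) * (1 + t) ^ (-α) := by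
    set x := (1 + t) / 2 with hxdef
    have hx : 0 < x := by positivity
    have hk := key_exp' (α + 1) x (by linarith) hx
    have hxa : x ^ (α + 1) = x ^ α * x := by
      rw [Real.rpow_add hx, Real.rpow_one]
    have hpow : (1 + t) ^ α = (2:ℝ) ^ α * x ^ α := by
      rw [← Real.mul_rpow (by norm_num) hx.le]
      congr 1; rw [hxdef]; ring
    have hxapos : (0:ℝ) < x ^ α := Real.rpow_pos_of_pos hx α
    have hexp2 : Real.exp (-(t/2)) = Real.exp (1/2) * Real.exp (-x) := by
      rw [← Real.exp_add]; congr 1; rw [hxdef]; ring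
    have hP : (0:ℝ) < (1 + t) ^ α := Real.rpow_pos_of_pos h1t α
    rw [Real.rpow_neg h1t.le, ← div_eq_mul_inv, le_div_iff₀ hP]
    calc (t/2) * Real.exp (-(t/2)) * (1 + t) ^ α
        = (t/2) * (Real.exp (1/2) * Real.exp (-x)) * ((2:ℝ) ^ α * x ^ α) := by
          rw [hexp2, hpow]
      _ ≤ x * (Real.exp (1/2) * Real.exp (-x)) * ((2:ℝ) ^ α * x ^ α) := by
          have h2 : t/2 ≤ x := by rw [hxdef]; linarith
          have p1 : (0:ℝ) ≤ Real.exp (1/2) * Real.exp (-x) := by positivity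
          have p2 : (0:ℝ) ≤ (2:ℝ) ^ α * x ^ α := by positivity
          exact mul_le_mul_of_nonneg_right (mul_le_mul_of_nonneg_right h2 p1) p2
      _ = (2:ℝ) ^ α * Real.exp (1/2) * (Real.exp (-x) * x ^ (α + 1)) := by
          rw [hxa]; ring
      _ ≤ (2:ℝ) ^ α * Real.exp (1/2) * ((α + 1) / Real.exp 1) ^ (α + 1) := by
          apply mul_le_mul_of_nonneg_left hk (by positivity)
      _ ≤ (2:ℝ) ^ α * Real.exp 1 * ((α + 1) / Real.exp 1) ^ (α + 1) := by
          have h12 : Real.exp (1/2) ≤ Real.exp 1 := Real.exp_le_exp.2 (by norm_num)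
          have p1 : (0:ℝ) ≤ ((α + 1) / Real.exp 1) ^ (α + 1) := by positivity
          have p2 : (0:ℝ) ≤ (2:ℝ) ^ α := by positivity
          exact mul_le_mul_of_nonneg_right (mul_le_mul_of_nonneg_left h12 p2) p1
      _ = (2:ℝ) ^ α * (((α + 1) / Real.exp 1) ^ (α + 1) * Real.exp 1) := by ring
  -- tail bound
  have htail : (∫ τ in (t/2)..t, φ τ) ≤ (1 + t/2) ^ (-α) := by
    have h := intervalIntegral.integral_mono_on (by linarith : t/2 ≤ t)
      (hii (t/2) t (by linarith) ht)
      (by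
        apply (Continuous.continuousOn (by continuity :
          Continuous fun τ : ℝ => Real.exp (-(t - τ)) * (1 + t/2) ^ (-α))).intervalIntegrable)
      (fun x hx => by
        obtain ⟨hx0, hx1⟩ := hx
        have e2 : (1 + x) ^ (-α) ≤ (1 + t/2) ^ (-α) :=
          Real.rpow_le_rpow_of_nonpos (by linarith) (by linarith) (by linarith)
        exact mul_le_mul_of_nonneg_left e2 (Real.exp_pos _).le)
    have hcomp : (∫ τ in (t/2)..t, Real.exp (-(t - τ)) * (1 + t/2) ^ (-α))
        = (1 - Real.exp (-(t/2))) * (1 + t/2) ^ (-α) := by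
      have : (∫ τ in (t/2)..t, Real.exp (-(t - τ)))
          = Real.exp 0 - Real.exp (t/2 - t) := by
        have h0 : (fun τ : ℝ => Real.exp (-(t - τ))) = fun τ : ℝ => Real.exp (τ - t) := by
          funext τ; congr 1; ring
        rw [h0, intervalIntegral.integral_comp_sub_right (fun x => Real.exp x) t,
          integral_exp]
        norm_num
      rw [intervalIntegral.integral_mul_const, this]
      have : t/2 - t = -(t/2) := by ring
      rw [this, Real.exp_zero]
    rw [hcomp] at h
    calc (∫ τ in (t/2)..t, φ τ) ≤ (1 - Real.exp (-(t/2))) * (1 + t/2) ^ (-α) := h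
      _ ≤ 1 * (1 + t/2) ^ (-α) := by
          apply mul_le_mul_of_nonneg_right _ (Real.rpow_nonneg (by linarith) _)
          linarith [Real.exp_pos (-(t/2))]
      _ = (1 + t/2) ^ (-α) := one_mul _
  have htailc : (1 + t/2) ^ (-α) ≤ (2:ℝ) ^ α * (1 + t) ^ (-α) := by
    have hh : (0:ℝ) < 1 + t/2 := by linarith
    have h1 : (1 + t) ^ α ≤ (2:ℝ) ^ α * (1 + t/2) ^ α := by
      rw [← Real.mul_rpow (by norm_num) hh.le]
      exact Real.rpow_le_rpow h1t.le (by linarith) hα.le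
    have hP : (0:ℝ) < (1 + t) ^ α := Real.rpow_pos_of_pos h1t α
    have hQ : (0:ℝ) < (1 + t/2) ^ α := Real.rpow_pos_of_pos hh α
    rw [Real.rpow_neg h1t.le, Real.rpow_neg hh.le]
    rw [← div_eq_mul_inv, le_div_iff₀ hP, inv_mul_eq_div, div_le_iff₀ hQ]
    nlinarith
  calc (∫ τ in (0:ℝ)..t, φ τ)
      = (∫ τ in (0:ℝ)..(t/2), φ τ) + ∫ τ in (t/2)..t, φ τ := hsplit
    _ ≤ ((2:ℝ) ^ α * (((α + 1) / Real.exp 1) ^ (α + 1) * Real.exp 1) * (1 + t) ^ (-α))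
        + (2:ℝ) ^ α * (1 + t) ^ (-α) := by
        have := le_trans hhead hheadc
        have := le_trans htail htailc
        linarith
    _ = ((2:ℝ) ^ α * (((α + 1) / Real.exp 1) ^ (α + 1) * Real.exp 1 + 1)) * (1 + t) ^ (-α) := by
        ring

/-- Energy-decay step. Let `μ > 0`, `M ≥ 0`, `y₀ ≥ 0`. Suppose `y, g : [0,∞) → [0,∞)` are
measurable, `g τ ≤ M² (1+τ)^{-2μ}` for a.e. `τ ≥ 0`, and
`y t ≤ e^{-t} y₀ + ∫_0^t e^{-(t-τ)} g τ dτ` for all `t ≥ 0`. Then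
`y t ≤ (y₀ d₀(2μ,1) e + M² d₁(2μ,1)) (1+t)^{-2μ}` for all `t ≥ 0`, where
`d₀(2μ,1) = (2μ/e)^{2μ}` and `d₁(2μ,1) = 2^{2μ} [((2μ+1)/e)^{2μ+1} e + 1]`. -/
theorem stmt11 (μ M y₀ : ℝ) (hμ : 0 < μ) (hM : 0 ≤ M) (hy₀ : 0 ≤ y₀)
    (y g : ℝ → ℝ) (hy : Measurable y) (hg : Measurable g)
    (hynn : ∀ t : ℝ, 0 ≤ t → 0 ≤ y t) (hgnn : ∀ t : ℝ, 0 ≤ t → 0 ≤ g t)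
    (hgb : ∀ᵐ τ ∂(volume : Measure ℝ), 0 ≤ τ → g τ ≤ M ^ 2 * (1 + τ) ^ (-(2 * μ)))
    (hint : ∀ t : ℝ, 0 ≤ t →
      y t ≤ Real.exp (-t) * y₀ + ∫ τ in (0:ℝ)..t, Real.exp (-(t - τ)) * g τ) :
    ∀ t : ℝ, 0 ≤ t →
      y t ≤ (y₀ * ((2 * μ / Real.exp 1) ^ (2 * μ) * Real.exp 1)
              + M ^ 2 * ((2:ℝ) ^ (2 * μ)
                  * (((2 * μ + 1) / Real.exp 1) ^ (2 * μ + 1) * Real.exp 1 + 1)))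
            * (1 + t) ^ (-(2 * μ)) := by
  intro t ht
  have hα : 0 < 2 * μ := by positivity
  have h1t : (0:ℝ) < 1 + t := by linarith
  have hP : (0:ℝ) < (1 + t) ^ (2*μ) := Real.rpow_pos_of_pos h1t _
  have hPn : (0:ℝ) ≤ (1 + t) ^ (-(2*μ)) := Real.rpow_nonneg h1t.le _
  set φ : ℝ → ℝ := fun τ => Real.exp (-(t - τ)) * (1 + τ) ^ (-(2*μ)) with hφdef
  -- exp decay bound
  have hexpb : Real.exp (-t) ≤ (2 * μ / Real.exp 1) ^ (2 * μ) * Real.exp 1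
      * (1 + t) ^ (-(2*μ)) := by
    have hk := key_exp' (2*μ) (1 + t) hα h1t
    have he : Real.exp (-t) = Real.exp 1 * Real.exp (-(1 + t)) := by
      rw [← Real.exp_add]; congr 1; ring
    rw [Real.rpow_neg h1t.le, ← div_eq_mul_inv, le_div_iff₀ hP, he]
    nlinarith [Real.exp_pos 1, Real.exp_pos (-(1+t)),
      Real.rpow_nonneg (show (0:ℝ) ≤ 1 + t by linarith) (2*μ)]
  -- integrability of φ on [0,t]
  have hcont : ContinuousOn φ (Set.Ici (0:ℝ)) := by
    apply ContinuousOn.mul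
    · exact (Real.continuous_exp.comp (by continuity)).continuousOn
    · exact (continuousOn_const.add continuousOn_id).rpow_const
        (fun x hx => Or.inl (by simp only [Set.mem_Ici] at hx; show (1:ℝ) + x ≠ 0; exact (by linarith : (0:ℝ) < 1 + x).ne'))
  have hiiφ : IntervalIntegrable φ volume 0 t := by
    apply (hcont.mono _).intervalIntegrable
    rw [Set.uIcc_of_le ht]
    exact fun x hx => hx.1
  have hiiMφ : IntervalIntegrable (fun τ => M ^ 2 * φ τ) volume 0 t :=
    hiiφ.const_mul _
  -- integrability of the forcing integrand
  have hF : IntervalIntegrable (fun τ => Real.exp (-(t - τ)) * g τ) volume 0 t := by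
    rw [intervalIntegrable_iff_integrableOn_Ioc_of_le ht]
    apply MeasureTheory.Integrable.mono' (g := fun τ => M ^ 2 * φ τ)
    · exact ((intervalIntegrable_iff_integrableOn_Ioc_of_le ht).1 hiiMφ)
    · exact ((measurable_const.sub measurable_id).neg.exp.mul hg).aestronglyMeasurable
    · filter_upwards [ae_restrict_of_ae hgb,
        ae_restrict_mem (measurableSet_Ioc : MeasurableSet (Set.Ioc (0:ℝ) t))] with τ hτb hτm
      have hτ0 : 0 ≤ τ := hτm.1.le
      have hgτ : g τ ≤ M ^ 2 * (1 + τ) ^ (-(2*μ)) := hτb hτ0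
      have hgτ0 : 0 ≤ g τ := hgnn τ hτ0
      rw [Real.norm_eq_abs, abs_of_nonneg (by positivity)]
      calc Real.exp (-(t - τ)) * g τ ≤ Real.exp (-(t - τ)) * (M ^ 2 * (1 + τ) ^ (-(2*μ))) :=
            mul_le_mul_of_nonneg_left hgτ (Real.exp_pos _).le
        _ = M ^ 2 * φ τ := by rw [hφdef]; ring
  -- compare integrals
  have hcmp : (∫ τ in (0:ℝ)..t, Real.exp (-(t - τ)) * g τ) ≤ ∫ τ in (0:ℝ)..t, M ^ 2 * φ τ := by
    apply intervalIntegral.integral_mono_ae_restrict ht hF hiiMφ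
    filter_upwards [ae_restrict_of_ae hgb,
      ae_restrict_mem (measurableSet_Icc : MeasurableSet (Set.Icc (0:ℝ) t))] with τ hτb hτm
    have hτ0 : 0 ≤ τ := hτm.1
    have hgτ : g τ ≤ M ^ 2 * (1 + τ) ^ (-(2*μ)) := hτb hτ0
    calc Real.exp (-(t - τ)) * g τ ≤ Real.exp (-(t - τ)) * (M ^ 2 * (1 + τ) ^ (-(2*μ))) :=
          mul_le_mul_of_nonneg_left hgτ (Real.exp_pos _).le
      _ = M ^ 2 * φ τ := by rw [hφdef]; ring
  have hMint : (∫ τ in (0:ℝ)..t, M ^ 2 * φ τ)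
      ≤ M ^ 2 * (((2:ℝ) ^ (2*μ) * (((2*μ + 1) / Real.exp 1) ^ (2*μ + 1) * Real.exp 1 + 1))
        * (1 + t) ^ (-(2*μ))) := by
    rw [intervalIntegral.integral_const_mul]
    exact mul_le_mul_of_nonneg_left (phi_bound μ t hμ ht) (by positivity)
  have h0 := hint t ht
  have hyb : Real.exp (-t) * y₀ ≤ y₀ * ((2 * μ / Real.exp 1) ^ (2 * μ) * Real.exp 1)
      * (1 + t) ^ (-(2*μ)) := by
    calc Real.exp (-t) * y₀
        ≤ ((2 * μ / Real.exp 1) ^ (2 * μ) * Real.exp 1 * (1 + t) ^ (-(2*μ))) * y₀ :=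
          mul_le_mul_of_nonneg_right hexpb hy₀
      _ = y₀ * ((2 * μ / Real.exp 1) ^ (2 * μ) * Real.exp 1) * (1 + t) ^ (-(2*μ)) := by ring
  calc y t ≤ Real.exp (-t) * y₀ + ∫ τ in (0:ℝ)..t, Real.exp (-(t - τ)) * g τ := h0
    _ ≤ y₀ * ((2 * μ / Real.exp 1) ^ (2 * μ) * Real.exp 1) * (1 + t) ^ (-(2*μ))
        + M ^ 2 * (((2:ℝ) ^ (2*μ) * (((2*μ + 1) / Real.exp 1) ^ (2*μ + 1) * Real.exp 1 + 1))
          * (1 + t) ^ (-(2*μ))) := by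
        have := le_trans hcmp hMint
        linarith
    _ = (y₀ * ((2 * μ / Real.exp 1) ^ (2 * μ) * Real.exp 1)
          + M ^ 2 * ((2:ℝ) ^ (2 * μ)
              * (((2 * μ + 1) / Real.exp 1) ^ (2 * μ + 1) * Real.exp 1 + 1)))
        * (1 + t) ^ (-(2 * μ)) := by ring
end

section
/- Let $(c_n)_{n \ge 1}$ be a sequence of nonnegative real numbers, and define $d_n = \max\{ c_k c_{n-k} : 1 \le k \le n-1 \}$ for $n \ge 2$. Assume $\sum_{n=2}^{\infty} n \, d_n < \infty$ and that $c_{n_0} > 0$ for some index $n_0 \ge 1$. Then $\sum_{n=1}^{\infty} n \, c_n < \infty$; in particular $\sum_{n=1}^{\infty} c_n < \infty$. -/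
open Real

/-- Let `(c_n)_{n≥1}` be nonnegative, `d_n = max{ c_k c_{n-k} : 1 ≤ k ≤ n-1 }` for `n ≥ 2`
(encoded as `IsGreatest`). If `∑_{n≥2} n d_n < ∞` and `c_{n₀} > 0` for some `n₀ ≥ 1`, then
`∑_{n≥1} n c_n < ∞`; in particular `∑_{n≥1} c_n < ∞`. -/
theorem stmt13 (c : ℕ → ℝ) (hcnn : ∀ n : ℕ, 1 ≤ n → 0 ≤ c n)
    (d : ℕ → ℝ)
    (hd : ∀ n : ℕ, 2 ≤ n →
      IsGreatest {x : ℝ | ∃ k : ℕ, 1 ≤ k ∧ k ≤ n - 1 ∧ x = c k * c (n - k)} (d n))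
    (hsum : Summable (fun n : ℕ => ((n : ℝ) + 2) * d (n + 2)))
    (n₀ : ℕ) (hn₀ : 1 ≤ n₀) (hpos : 0 < c n₀) :
    Summable (fun n : ℕ => ((n : ℝ) + 1) * c (n + 1)) ∧
      Summable (fun n : ℕ => c (n + 1)) := by
  obtain ⟨m₀, rfl⟩ : ∃ m, n₀ = m + 1 := ⟨n₀ - 1, (Nat.succ_pred_eq_of_pos hn₀).symm⟩
  -- key inequality: c (m₀+1) * c (n+1) ≤ d (n + m₀ + 2)
  have key : ∀ n : ℕ, c (m₀ + 1) * c (n + 1) ≤ d (n + m₀ + 2) := by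
    intro n
    have h2 : 2 ≤ n + m₀ + 2 := by omega
    have heq : n + m₀ + 2 - (m₀ + 1) = n + 1 := by omega
    refine (hd _ h2).2 ⟨m₀ + 1, by omega, by omega, ?_⟩
    rw [heq]
  -- the shifted series is summable
  have hshift : Summable (fun n : ℕ => ((n : ℝ) + m₀ + 2) * d (n + m₀ + 2)) := by
    have := (summable_nat_add_iff m₀).2 hsum
    refine this.congr fun n => ?_
    push_cast
    ring_nf
  have hmul : Summable (fun n : ℕ =>
      (c (m₀ + 1))⁻¹ * (((n : ℝ) + m₀ + 2) * d (n + m₀ + 2))) := hshift.mul_left _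
  have h1 : Summable (fun n : ℕ => ((n : ℝ) + 1) * c (n + 1)) := by
    refine Summable.of_nonneg_of_le (fun n => ?_) (fun n => ?_) hmul
    · have := hcnn (n + 1) (by omega)
      positivity
    · have hkey := key n
      have hc1 := hcnn (n + 1) (by omega)
      have hdnn : 0 ≤ d (n + m₀ + 2) :=
        le_trans (mul_nonneg hpos.le hc1) hkey
      have hcle : c (n + 1) ≤ (c (m₀ + 1))⁻¹ * d (n + m₀ + 2) := by
        rw [le_inv_mul_iff₀ hpos]
        exact hkey
      calc ((n : ℝ) + 1) * c (n + 1)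
          ≤ ((n : ℝ) + 1) * ((c (m₀ + 1))⁻¹ * d (n + m₀ + 2)) := by
            apply mul_le_mul_of_nonneg_left hcle (by positivity)
        _ ≤ ((n : ℝ) + m₀ + 2) * ((c (m₀ + 1))⁻¹ * d (n + m₀ + 2)) := by
            apply mul_le_mul_of_nonneg_right (by push_cast; linarith [Nat.cast_nonneg (α := ℝ) m₀])
            positivity
        _ = (c (m₀ + 1))⁻¹ * (((n : ℝ) + m₀ + 2) * d (n + m₀ + 2)) := by ring
  refine ⟨h1, ?_⟩
  refine Summable.of_nonneg_of_le (fun n => hcnn _ (by omega)) (fun n => ?_) h1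
  have := hcnn (n + 1) (by omega)
  nlinarith [Nat.cast_nonneg (α := ℝ) n]
end
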